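/- arXiv:2302.06880 — 5 statements merged into one kernel-verified Lean document; each statement's English description precedes it below -/
import Mathlib

section
/- Let ρ be a 4×4 Hermitian positive semidefinite matrix (a two-qubit state) and R a 2×2 complex matrix. Define ρ_R = (R⊗I) ρ (R^†⊗I) and, for any 4×4 matrix σ, σ̃ = (σ_y⊗σ_y) σ^* (σ_y⊗σ_y). Then the matrix ρ_R · ρ̃_R equals |det(R)|² times a matrix similar to ρ·ρ̃; in particular ρ_R ρ̃_R and |det(R)|² ρ ρ̃ have the same eigenvalues (with multiplicity, i.e., the same characteristic polynomial). -/
open Matrix Complex Kronecker ComplexOrder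

noncomputable def pauliY : Matrix (Fin 2) (Fin 2) ℂ := !![0, -Complex.I; Complex.I, 0]

/-- The spin-flip operation σ̃ = (σ_y⊗σ_y) σ^* (σ_y⊗σ_y). -/
noncomputable def spinFlip (σ : Matrix (Fin 2 × Fin 2) (Fin 2 × Fin 2) ℂ) :
    Matrix (Fin 2 × Fin 2) (Fin 2 × Fin 2) ℂ :=
  (pauliY ⊗ₖ pauliY) * σ.map star * (pauliY ⊗ₖ pauliY)

open Polynomial in
lemma charpoly_conj' (S A : Matrix (Fin 2 × Fin 2) (Fin 2 × Fin 2) ℂ) (hS : IsUnit S.det) :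
    (S * A * S⁻¹).charpoly = A.charpoly := by
  have hinv := S.mul_nonsing_inv hS
  have h1 : (S.map C) * (S⁻¹.map C) = 1 := by
    rw [← Matrix.map_mul, hinv]; simp
  have key : charmatrix (S * A * S⁻¹) =
      (S.map C) * charmatrix A * (S⁻¹.map C) := by
    rw [charmatrix, charmatrix, mul_sub, sub_mul]
    congr 1
    · have hc1 : (scalar (Fin 2 × Fin 2) X) * (S⁻¹.map C) = (S⁻¹.map C) * scalar _ X := by
        ext i j
        simp [mul_apply, scalar_apply, diagonal]
      rw [mul_assoc, hc1, ← mul_assoc, h1, one_mul]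
    · show C.mapMatrix (S * A * S⁻¹) = _
      rw [_root_.map_mul, _root_.map_mul]
      rfl
  rw [Matrix.charpoly, key, det_mul, det_mul, Matrix.charpoly]
  rw [mul_comm ((S.map C).det * (charmatrix A).det), ← mul_assoc, mul_comm ((S⁻¹.map C).det),
    ← det_mul, h1]
  simp

lemma pauliY_sq : pauliY * pauliY = 1 := by
  ext i j
  fin_cases i <;> fin_cases j <;> simp [Matrix.mul_apply, Fin.sum_univ_succ, pauliY]

lemma key_lemA (R : Matrix (Fin 2) (Fin 2) ℂ) :
    Rᴴ * pauliY * R.map star = (star R.det) • pauliY := by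
  ext i j
  fin_cases i <;> fin_cases j <;>
    simp [Matrix.mul_apply, Fin.sum_univ_succ, pauliY, Matrix.det_fin_two,
      Matrix.conjTranspose_apply] <;> ring

lemma key_lemB (R : Matrix (Fin 2) (Fin 2) ℂ) :
    Rᵀ * pauliY = pauliY * R.adjugate := by
  ext i j
  fin_cases i <;> fin_cases j <;>
    simp [Matrix.mul_apply, Fin.sum_univ_succ, pauliY, Matrix.adjugate_fin_two] <;> ring

lemma map_star_mul' {n : Type*} [Fintype n]
    (M N : Matrix n n ℂ) : (M * N).map star = M.map star * N.map star := by
  ext i j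
  simp [mul_apply, Matrix.map_apply]

lemma key_product (ρ : Matrix (Fin 2 × Fin 2) (Fin 2 × Fin 2) ℂ)
    (R : Matrix (Fin 2) (Fin 2) ℂ) :
    ((R ⊗ₖ (1 : Matrix (Fin 2) (Fin 2) ℂ)) * ρ * (Rᴴ ⊗ₖ (1 : Matrix (Fin 2) (Fin 2) ℂ))) *
      spinFlip ((R ⊗ₖ (1 : Matrix (Fin 2) (Fin 2) ℂ)) * ρ *
        (Rᴴ ⊗ₖ (1 : Matrix (Fin 2) (Fin 2) ℂ))) =
    (star R.det) • ((R ⊗ₖ (1 : Matrix (Fin 2) (Fin 2) ℂ)) * (ρ * spinFlip ρ) *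
      (R.adjugate ⊗ₖ (1 : Matrix (Fin 2) (Fin 2) ℂ))) := by
  have hmap : ((R ⊗ₖ (1 : Matrix (Fin 2) (Fin 2) ℂ)) * ρ *
        (Rᴴ ⊗ₖ (1 : Matrix (Fin 2) (Fin 2) ℂ))).map star =
      (R.map star ⊗ₖ (1 : Matrix (Fin 2) (Fin 2) ℂ)) * ρ.map star *
        (Rᵀ ⊗ₖ (1 : Matrix (Fin 2) (Fin 2) ℂ)) := by
    rw [map_star_mul', map_star_mul']
    congr 1
    · congr 1
      ext ⟨i,k⟩ ⟨j,l⟩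
      simp [kroneckerMap_apply, Matrix.map_apply, Matrix.one_apply]
      split <;> simp
    · ext ⟨i,k⟩ ⟨j,l⟩
      simp [kroneckerMap_apply, Matrix.map_apply, Matrix.one_apply,
        Matrix.conjTranspose_apply, Matrix.transpose_apply]
      split <;> simp
  rw [spinFlip, hmap]
  -- middle collapse: (Rᴴ⊗1) * (Y⊗Y) * (R*⊗1) = star det • (Y⊗Y)
  have hmid : (Rᴴ ⊗ₖ (1 : Matrix (Fin 2) (Fin 2) ℂ)) * (pauliY ⊗ₖ pauliY) *
      (R.map star ⊗ₖ (1 : Matrix (Fin 2) (Fin 2) ℂ)) =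
      (star R.det) • (pauliY ⊗ₖ pauliY) := by
    rw [← Matrix.mul_kronecker_mul, ← Matrix.mul_kronecker_mul, key_lemA]
    simp [Matrix.smul_kronecker]
  have hright : (Rᵀ ⊗ₖ (1 : Matrix (Fin 2) (Fin 2) ℂ)) * (pauliY ⊗ₖ pauliY) =
      (pauliY ⊗ₖ pauliY) * (R.adjugate ⊗ₖ (1 : Matrix (Fin 2) (Fin 2) ℂ)) := by
    rw [← Matrix.mul_kronecker_mul, ← Matrix.mul_kronecker_mul, key_lemB]
    simp
  calc (R ⊗ₖ (1 : Matrix (Fin 2) (Fin 2) ℂ)) * ρ * (Rᴴ ⊗ₖ (1 : Matrix (Fin 2) (Fin 2) ℂ)) *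
      ((pauliY ⊗ₖ pauliY) *
        ((R.map star ⊗ₖ (1 : Matrix (Fin 2) (Fin 2) ℂ)) * ρ.map star *
          (Rᵀ ⊗ₖ (1 : Matrix (Fin 2) (Fin 2) ℂ))) * (pauliY ⊗ₖ pauliY))
      = (R ⊗ₖ (1 : Matrix (Fin 2) (Fin 2) ℂ)) * ρ *
        ((Rᴴ ⊗ₖ (1 : Matrix (Fin 2) (Fin 2) ℂ)) * (pauliY ⊗ₖ pauliY) *
          (R.map star ⊗ₖ (1 : Matrix (Fin 2) (Fin 2) ℂ))) * ρ.map star *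
        ((Rᵀ ⊗ₖ (1 : Matrix (Fin 2) (Fin 2) ℂ)) * (pauliY ⊗ₖ pauliY)) := by
        noncomm_ring
    _ = (star R.det) • ((R ⊗ₖ (1 : Matrix (Fin 2) (Fin 2) ℂ)) * (ρ * spinFlip ρ) *
        (R.adjugate ⊗ₖ (1 : Matrix (Fin 2) (Fin 2) ℂ))) := by
        rw [hmid, hright, spinFlip]
        simp only [Matrix.mul_smul, Matrix.smul_mul]
        noncomm_ring

theorem local_filtering_spectral_invariance
    (ρ : Matrix (Fin 2 × Fin 2) (Fin 2 × Fin 2) ℂ)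
    (hherm : ρ.IsHermitian) (hpsd : ρ.PosSemidef)
    (R : Matrix (Fin 2) (Fin 2) ℂ)
    (ρR : Matrix (Fin 2 × Fin 2) (Fin 2 × Fin 2) ℂ)
    (hρR : ρR = (R ⊗ₖ (1 : Matrix (Fin 2) (Fin 2) ℂ)) * ρ *
      (Rᴴ ⊗ₖ (1 : Matrix (Fin 2) (Fin 2) ℂ))) :
    (∃ S : Matrix (Fin 2 × Fin 2) (Fin 2 × Fin 2) ℂ, IsUnit S.det ∧
      ρR * spinFlip ρR =
        ((Complex.normSq R.det : ℂ)) • (S * (ρ * spinFlip ρ) * S⁻¹)) ∧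
    (ρR * spinFlip ρR).charpoly =
      (((Complex.normSq R.det : ℂ)) • (ρ * spinFlip ρ)).charpoly := by
  have hkey := key_product ρ R
  rw [← hρR] at hkey
  by_cases hu : IsUnit R.det
  · -- invertible case
    set S : Matrix (Fin 2 × Fin 2) (Fin 2 × Fin 2) ℂ := R ⊗ₖ (1 : Matrix (Fin 2) (Fin 2) ℂ)
      with hS
    have hdetS : S.det = R.det ^ 2 := by
      rw [hS, Matrix.det_kronecker]
      simp
    have hSu : IsUnit S.det := by rw [hdetS]; exact hu.pow 2
    have hSinv : S⁻¹ = R⁻¹ ⊗ₖ (1 : Matrix (Fin 2) (Fin 2) ℂ) := by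
      apply Matrix.inv_eq_right_inv
      rw [hS, ← Matrix.mul_kronecker_mul, Matrix.mul_nonsing_inv _ hu, one_mul,
        Matrix.one_kronecker_one]
    have hadj : R.adjugate = R.det • R⁻¹ := by
      rw [Matrix.inv_def, smul_smul, Ring.mul_inverse_cancel _ hu, one_smul]
    have hmain : ρR * spinFlip ρR =
        ((Complex.normSq R.det : ℂ)) • (S * (ρ * spinFlip ρ) * S⁻¹) := by
      rw [hkey, hadj, hSinv]
      rw [Matrix.smul_kronecker, Matrix.mul_smul, smul_smul,
        Complex.normSq_eq_conj_mul_self]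
      rfl
    refine ⟨⟨S, hSu, hmain⟩, ?_⟩
    rw [hmain]
    have : ((Complex.normSq R.det : ℂ)) • (S * (ρ * spinFlip ρ) * S⁻¹) =
        S * (((Complex.normSq R.det : ℂ)) • (ρ * spinFlip ρ)) * S⁻¹ := by
      rw [Matrix.mul_smul, Matrix.smul_mul]
    rw [this, charpoly_conj' _ _ hSu]
  · -- det R = 0
    have hd : R.det = 0 := by
      by_contra h
      exact hu (isUnit_iff_ne_zero.mpr h)
    have hz : ρR * spinFlip ρR = 0 := by
      rw [hkey, hd]
      simp
    have hz2 : ((Complex.normSq R.det : ℂ)) = 0 := by rw [hd]; simp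
    constructor
    · exact ⟨1, by simp, by rw [hz, hz2, zero_smul]⟩
    · rw [hz, hz2, zero_smul]
end

section
/- Let ρ be a two-qubit density matrix with Wootters concurrence C(ρ) and let R be an invertible 2×2 matrix with tr((R⊗I)ρ(R^†⊗I)) ≠ 0. Then the normalized post-measurement state ρ' = (R⊗I)ρ(R^†⊗I)/tr((R⊗I)ρ(R^†⊗I)) satisfies C(ρ') = |det(R)|·C(ρ)/tr((R⊗I)ρ(R^†⊗I)). In particular, if C(ρ) > 0 and det(R) ≠ 0, then C(ρ') > 0. -/
open Matrix Complex Kronecker ComplexOrder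

/-- Wootters' concurrence: `max {0, √λ₁ − √λ₂ − √λ₃ − √λ₄}` where the `λᵢ` are the
(real, nonnegative) eigenvalues of `ρ ρ̃` in decreasing order.  Since
`√λ₁ − √λ₂ − √λ₃ − √λ₄ = 2 max √λᵢ − Σ √λᵢ`, we use the latter expression. -/
noncomputable def concurrence (ρ : Matrix (Fin 2 × Fin 2) (Fin 2 × Fin 2) ℂ) : ℝ :=
  let s := (((ρ * spinFlip ρ).charpoly.roots).map (fun z => Real.sqrt z.re)).toList
  max 0 (2 * s.foldr max 0 - s.sum)

section Aux

lemma pauliY_conj (A : Matrix (Fin 2) (Fin 2) ℂ) :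
    pauliY * A.map star * pauliY = (Aᴴ).adjugate := by
  ext i j
  fin_cases i <;> fin_cases j <;>
    simp [pauliY, Matrix.mul_apply, Fin.sum_univ_succ, Matrix.adjugate_fin_two,
      Matrix.conjTranspose_apply, Matrix.map_apply, Matrix.vecMul, dotProduct, Matrix.vecHead, Matrix.vecTail] <;>
    ring_nf <;> simp [Complex.I_sq]

open Polynomial in
lemma eval_charpoly' {n : Type*} [Fintype n] [DecidableEq n] (M : Matrix n n ℂ) (x : ℂ) :
    M.charpoly.eval x = (x • (1 : Matrix n n ℂ) - M).det := by
  rw [Matrix.charpoly, ← Polynomial.coe_evalRingHom, RingHom.map_det]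
  congr 1
  ext i j
  by_cases h : i = j
  · subst h; simp [Matrix.charmatrix_apply_eq, Matrix.one_apply, Matrix.smul_apply]
  · simp [Matrix.charmatrix_apply_ne _ _ _ h, Matrix.one_apply_ne h, Matrix.smul_apply,
      Matrix.sub_apply, Matrix.one_apply]

lemma YY_sq : (pauliY ⊗ₖ pauliY) * (pauliY ⊗ₖ pauliY) = 1 := by
  rw [← Matrix.mul_kronecker_mul, pauliY_sq, Matrix.one_kronecker_one]

lemma map_star_mul {m : Type*} [Fintype m] (A B : Matrix m m ℂ) :
    (A * B).map star = A.map star * B.map star := by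
  ext i j
  simp [Matrix.map_apply, Matrix.mul_apply, star_sum]

lemma map_star_smul {m : Type*} (c : ℂ) (A : Matrix m m ℂ) :
    (c • A).map star = (star c) • A.map star := by
  ext i j; simp [Matrix.map_apply]

lemma kron_one_map_star (A : Matrix (Fin 2) (Fin 2) ℂ) :
    ((A ⊗ₖ (1 : Matrix (Fin 2) (Fin 2) ℂ)).map star) = A.map star ⊗ₖ 1 := by
  ext ⟨i, j⟩ ⟨k, l⟩
  simp only [Matrix.kroneckerMap_apply, Matrix.map_apply, Matrix.one_apply]
  split_ifs <;> simp

lemma kron_one_conjTranspose (A : Matrix (Fin 2) (Fin 2) ℂ) :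
    (A ⊗ₖ (1 : Matrix (Fin 2) (Fin 2) ℂ))ᴴ = Aᴴ ⊗ₖ 1 := by
  ext ⟨i, j⟩ ⟨k, l⟩
  simp [Matrix.kroneckerMap_apply, Matrix.conjTranspose_apply, Matrix.one_apply, apply_ite star,
    eq_comm]

lemma conj3 {M : Type*} [NonAssocRing M]  : True := trivial

lemma YY_conj3 (a b c : Matrix (Fin 2 × Fin 2) (Fin 2 × Fin 2) ℂ) :
    (pauliY ⊗ₖ pauliY) * (a * b * c) * (pauliY ⊗ₖ pauliY) =
      ((pauliY ⊗ₖ pauliY) * a * (pauliY ⊗ₖ pauliY)) *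
      ((pauliY ⊗ₖ pauliY) * b * (pauliY ⊗ₖ pauliY)) *
      ((pauliY ⊗ₖ pauliY) * c * (pauliY ⊗ₖ pauliY)) := by
  have h : ∀ x : Matrix (Fin 2 × Fin 2) (Fin 2 × Fin 2) ℂ,
      (pauliY ⊗ₖ pauliY) * ((pauliY ⊗ₖ pauliY) * x) = x := fun x => by
    rw [← Matrix.mul_assoc, YY_sq, Matrix.one_mul]
  simp only [Matrix.mul_assoc, h]

lemma spinFlip_smul (a : ℂ) (σ : Matrix (Fin 2 × Fin 2) (Fin 2 × Fin 2) ℂ) :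
    spinFlip (a • σ) = star a • spinFlip σ := by
  unfold spinFlip
  rw [map_star_smul, Matrix.mul_smul, Matrix.smul_mul]

lemma YY_kron_sandwich (A : Matrix (Fin 2) (Fin 2) ℂ) :
    (pauliY ⊗ₖ pauliY) * ((A ⊗ₖ (1 : Matrix (Fin 2) (Fin 2) ℂ)).map star) * (pauliY ⊗ₖ pauliY) =
      (Aᴴ.adjugate) ⊗ₖ 1 := by
  rw [kron_one_map_star, ← Matrix.mul_kronecker_mul, ← Matrix.mul_kronecker_mul, pauliY_conj,
    Matrix.mul_one, pauliY_sq]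

lemma spinFlip_sandwich (A B : Matrix (Fin 2) (Fin 2) ℂ)
    (ρ : Matrix (Fin 2 × Fin 2) (Fin 2 × Fin 2) ℂ) :
    spinFlip ((A ⊗ₖ (1 : Matrix (Fin 2) (Fin 2) ℂ)) * ρ * (B ⊗ₖ (1 : Matrix (Fin 2) (Fin 2) ℂ))) =
      ((Aᴴ.adjugate) ⊗ₖ 1) * spinFlip ρ * ((Bᴴ.adjugate) ⊗ₖ 1) := by
  unfold spinFlip
  rw [map_star_mul, map_star_mul, YY_conj3, YY_kron_sandwich, YY_kron_sandwich]

end Aux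

open Polynomial in
lemma charpoly_key (S N P : Matrix (Fin 2 × Fin 2) (Fin 2 × Fin 2) ℂ) (α d : ℂ)
    (hα : α ≠ 0) (hd : d ≠ 0)
    (hSP : S * P = d • 1) (hPS : P * S = d • 1) :
    (α • (S * N * P)).charpoly.roots = N.charpoly.roots.map (fun z => α * d * z) := by
  have hc : α * d ≠ 0 := mul_ne_zero hα hd
  have hcard4 : (Fintype.card (Fin 2 × Fin 2)) = 4 := by simp
  have hPSdet : P.det * S.det = d ^ 4 := by
    have h := congrArg Matrix.det hPS
    rw [Matrix.det_mul, Matrix.det_smul, Matrix.det_one, hcard4, mul_one] at h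
    exact h
  have hpoly : (α • (S * N * P)).charpoly =
      ((N.charpoly.roots.map (fun z => α * d * z)).map (fun r => X - C r)).prod := by
    apply Polynomial.funext
    intro x
    rw [eval_charpoly']
    have e1 : P * (x • (1 : Matrix (Fin 2 × Fin 2) (Fin 2 × Fin 2) ℂ) - α • (S * N * P)) * S =
        d • (x • (1 : Matrix (Fin 2 × Fin 2) (Fin 2 × Fin 2) ℂ) - (α * d) • N) := by
      have hm : P * (S * N * P) * S = (d • (1:Matrix (Fin 2 × Fin 2) (Fin 2 × Fin 2) ℂ)) * N *
          (d • (1:Matrix (Fin 2 × Fin 2) (Fin 2 × Fin 2) ℂ)) := by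
        rw [← hPS]
        simp only [Matrix.mul_assoc]
      rw [Matrix.mul_sub, Matrix.sub_mul, Matrix.mul_smul, Matrix.smul_mul, Matrix.mul_smul,
        Matrix.smul_mul, Matrix.mul_one, hPS, hm]
      simp only [Matrix.smul_mul, Matrix.mul_smul, Matrix.one_mul, Matrix.mul_one, smul_smul,
        smul_sub]
      congr 1
      · congr 1; ring
      · congr 1; ring
    have e2 : (x • (1 : Matrix (Fin 2 × Fin 2) (Fin 2 × Fin 2) ℂ) - α • (S * N * P)).det =
        (x • (1 : Matrix (Fin 2 × Fin 2) (Fin 2 × Fin 2) ℂ) - (α * d) • N).det := by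
      have h := congrArg Matrix.det e1
      rw [Matrix.det_mul, Matrix.det_mul, Matrix.det_smul, hcard4] at h
      have h' : P.det * S.det * (x • (1 : Matrix (Fin 2 × Fin 2) (Fin 2 × Fin 2) ℂ)
          - α • (S * N * P)).det = d ^ 4 * (x • (1 : Matrix (Fin 2 × Fin 2) (Fin 2 × Fin 2) ℂ)
          - (α * d) • N).det := by rw [← h]; ring
      rw [hPSdet] at h'
      exact mul_left_cancel₀ (pow_ne_zero 4 hd) h'
    have e3 : x • (1 : Matrix (Fin 2 × Fin 2) (Fin 2 × Fin 2) ℂ) - (α * d) • N =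
        (α * d) • ((((α * d)⁻¹ * x) • (1 : Matrix (Fin 2 × Fin 2) (Fin 2 × Fin 2) ℂ)) - N) := by
      rw [smul_sub, smul_smul, ← mul_assoc, mul_inv_cancel₀ hc, one_mul]
    rw [e2, e3, Matrix.det_smul, hcard4, ← eval_charpoly']
    have hsplit := (IsAlgClosed.splits N.charpoly).eq_prod_roots_of_monic N.charpoly_monic
    have hcardroots : Multiset.card N.charpoly.roots = 4 := by
      rw [Polynomial.splits_iff_card_roots.mp
        (IsAlgClosed.splits N.charpoly),
        Matrix.charpoly_natDegree_eq_dim, hcard4]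
    conv_lhs => rw [hsplit]
    rw [Polynomial.eval_multiset_prod, Polynomial.eval_multiset_prod, Multiset.map_map,
      Multiset.map_map]
    simp only [Function.comp, Polynomial.eval_sub, Polynomial.eval_X, Polynomial.eval_C]
    rw [Multiset.map_map]
    simp only [Function.comp]
    have hz : ∀ z : ℂ, x - α * d * z = (α * d) * ((α * d)⁻¹ * x - z) := by
      intro z
      field_simp
    calc (α * d) ^ 4 * (N.charpoly.roots.map (fun a => (α * d)⁻¹ * x - a)).prod
        = (N.charpoly.roots.map (fun _ => α * d)).prod *
          (N.charpoly.roots.map (fun a => (α * d)⁻¹ * x - a)).prod := by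
          rw [Multiset.map_const', Multiset.prod_replicate, hcardroots]
      _ = (N.charpoly.roots.map (fun a => (α * d) * ((α * d)⁻¹ * x - a))).prod := by
          rw [← Multiset.prod_map_mul]
      _ = (N.charpoly.roots.map (fun z => x - α * d * z)).prod := by
          congr 1
          apply Multiset.map_congr rfl
          intro z _
          rw [hz z]
  rw [hpoly, Polynomial.roots_multiset_prod_X_sub_C]

instance : LeftCommutative (max : ℝ → ℝ → ℝ) := ⟨fun a b c => max_left_comm a b c⟩

lemma psd_trace_nonneg {m : Type*} [Fintype m] [DecidableEq m] {X : Matrix m m ℂ}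
    (h : X.PosSemidef) : 0 ≤ X.trace := by
  rw [Matrix.trace]
  apply Finset.sum_nonneg
  intro i _
  have := h.dotProduct_mulVec_nonneg (Pi.single i 1)
  simpa [dotProduct, Matrix.mulVec_single, Pi.single_apply, Finset.sum_ite_eq,
    Matrix.diag] using this

lemma foldr_max_map (k : ℝ) (hk : 0 ≤ k) (l : List ℝ) :
    (l.map (fun x => k * x)).foldr max 0 = k * l.foldr max 0 := by
  induction l with
  | nil => simp
  | cons a l ih => simp [ih, mul_max_of_nonneg _ _ hk]

lemma sum_map_mul (k : ℝ) (l : List ℝ) : (l.map (fun x => k * x)).sum = k * l.sum := by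
  induction l with
  | nil => simp
  | cons a l ih => simp [ih]; ring

lemma list_aux (k : ℝ) (hk : 0 ≤ k) (l l' : List ℝ) (h : l'.Perm (l.map (fun x => k * x))) :
    max 0 (2 * l'.foldr max 0 - l'.sum) = k * max 0 (2 * l.foldr max 0 - l.sum) := by
  rw [h.foldr_eq, h.sum_eq, foldr_max_map k hk, sum_map_mul]
  rw [show k * max 0 (2 * l.foldr max 0 - l.sum)
      = max (k * 0) (k * (2 * l.foldr max 0 - l.sum)) from mul_max_of_nonneg _ _ hk]
  ring_nf

lemma concurrence_def (ρ : Matrix (Fin 2 × Fin 2) (Fin 2 × Fin 2) ℂ) :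
    concurrence ρ = max 0
      (2 * ((((ρ * spinFlip ρ).charpoly.roots).map (fun z => Real.sqrt z.re)).toList.foldr max 0)
        - (((ρ * spinFlip ρ).charpoly.roots).map (fun z => Real.sqrt z.re)).toList.sum) := rfl

theorem concurrence_local_filtering
    (ρ : Matrix (Fin 2 × Fin 2) (Fin 2 × Fin 2) ℂ)
    (hpsd : ρ.PosSemidef) (htr : ρ.trace = 1)
    (R : Matrix (Fin 2) (Fin 2) ℂ) (hdet : R.det ≠ 0)
    (t : ℂ)
    (ht : t = ((R ⊗ₖ (1 : Matrix (Fin 2) (Fin 2) ℂ)) * ρ *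
      (Rᴴ ⊗ₖ (1 : Matrix (Fin 2) (Fin 2) ℂ))).trace)
    (htne : t ≠ 0)
    (ρ' : Matrix (Fin 2 × Fin 2) (Fin 2 × Fin 2) ℂ)
    (hρ' : ρ' = t⁻¹ • ((R ⊗ₖ (1 : Matrix (Fin 2) (Fin 2) ℂ)) * ρ *
      (Rᴴ ⊗ₖ (1 : Matrix (Fin 2) (Fin 2) ℂ)))) :
    concurrence ρ' = ‖R.det‖ * concurrence ρ / t.re ∧
    (concurrence ρ > 0 → concurrence ρ' > 0) := by
  have hT : (R ⊗ₖ (1 : Matrix (Fin 2) (Fin 2) ℂ))ᴴ = Rᴴ ⊗ₖ 1 := kron_one_conjTranspose R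
  have hpsd' : ((R ⊗ₖ (1 : Matrix (Fin 2) (Fin 2) ℂ)) * ρ *
      (Rᴴ ⊗ₖ (1 : Matrix (Fin 2) (Fin 2) ℂ))).PosSemidef := by
    rw [← hT]; exact hpsd.mul_mul_conjTranspose_same _
  have h0t : 0 ≤ t := ht ▸ psd_trace_nonneg hpsd'
  obtain ⟨htre, htim⟩ := Complex.nonneg_iff.mp h0t
  have htreal : (t.re : ℂ) = t := by
    apply Complex.ext <;> simp [← htim]
  have htre0 : t.re ≠ 0 := by
    intro h0; apply htne; rw [← htreal, h0]; simp
  have htrepos : 0 < t.re := lt_of_le_of_ne htre (Ne.symm htre0)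
  have hstar : star t = t := by rw [← htreal]; simp
  have hα : (t⁻¹ * star t⁻¹ * star R.det) ≠ 0 := by
    refine mul_ne_zero (mul_ne_zero (inv_ne_zero htne) ?_) ?_
    · simpa using inv_ne_zero htne
    · simpa using hdet
  have hQ : (Rᴴ ⊗ₖ (1 : Matrix (Fin 2) (Fin 2) ℂ)) * (Rᴴ.adjugate ⊗ₖ 1) = star R.det • 1 := by
    rw [← Matrix.mul_kronecker_mul, Matrix.mul_adjugate, Matrix.det_conjTranspose,
      Matrix.mul_one, Matrix.smul_kronecker, Matrix.one_kronecker_one]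
  have hSP : (R ⊗ₖ (1 : Matrix (Fin 2) (Fin 2) ℂ)) * (R.adjugate ⊗ₖ 1) = R.det • 1 := by
    rw [← Matrix.mul_kronecker_mul, Matrix.mul_adjugate, Matrix.mul_one,
      Matrix.smul_kronecker, Matrix.one_kronecker_one]
  have hPS : (R.adjugate ⊗ₖ (1 : Matrix (Fin 2) (Fin 2) ℂ)) * (R ⊗ₖ 1) = R.det • 1 := by
    rw [← Matrix.mul_kronecker_mul, Matrix.adjugate_mul, Matrix.mul_one,
      Matrix.smul_kronecker, Matrix.one_kronecker_one]
  have hflip : spinFlip ρ' =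
      star t⁻¹ • ((Rᴴ.adjugate ⊗ₖ (1 : Matrix (Fin 2) (Fin 2) ℂ)) * spinFlip ρ *
        (R.adjugate ⊗ₖ 1)) := by
    rw [hρ', spinFlip_smul, spinFlip_sandwich, Matrix.conjTranspose_conjTranspose]
  have hmid : ∀ X : Matrix (Fin 2 × Fin 2) (Fin 2 × Fin 2) ℂ,
      (Rᴴ ⊗ₖ (1 : Matrix (Fin 2) (Fin 2) ℂ)) * ((Rᴴ.adjugate ⊗ₖ 1) * X) = star R.det • X :=
    fun X => by rw [← Matrix.mul_assoc, hQ, Matrix.smul_mul, Matrix.one_mul]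
  have hprod : ρ' * spinFlip ρ' = (t⁻¹ * star t⁻¹ * star R.det) •
      ((R ⊗ₖ (1 : Matrix (Fin 2) (Fin 2) ℂ)) * (ρ * spinFlip ρ) * (R.adjugate ⊗ₖ 1)) := by
    rw [hflip, hρ', Matrix.smul_mul, Matrix.mul_smul, smul_smul]
    simp only [Matrix.mul_assoc, hmid, Matrix.mul_smul, smul_smul]
  have hroots := charpoly_key (R ⊗ₖ 1) (ρ * spinFlip ρ) (R.adjugate ⊗ₖ 1)
    (t⁻¹ * star t⁻¹ * star R.det) R.det hα hdet hSP hPS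
  rw [← hprod] at hroots
  set γ : ℝ := (‖R.det‖ / t.re) ^ 2 with hγ
  have hγnn : 0 ≤ ‖R.det‖ / t.re := by positivity
  have hγnn' : (0:ℝ) ≤ γ := by rw [hγ]; positivity
  have hcast : t⁻¹ * star t⁻¹ * star R.det * R.det = (γ : ℂ) := by
    have h1 : star R.det * R.det = ((‖R.det‖ ^ 2 : ℝ) : ℂ) := by
      rw [mul_comm, Complex.star_def, Complex.mul_conj]
      norm_cast
      rw [Complex.sq_norm]
    have hstarinv : star t⁻¹ = t⁻¹ := by rw [star_inv₀, hstar]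
    rw [mul_assoc, h1, hstarinv, ← htreal, hγ]
    have hre : (‖R.det‖ / t.re) ^ 2 = t.re⁻¹ * t.re⁻¹ * ‖R.det‖ ^ 2 := by
      rw [div_eq_mul_inv]
      ring
    rw [hre]
    push_cast
    ring
  have hms : ((ρ' * spinFlip ρ').charpoly.roots).map (fun z => Real.sqrt z.re) =
      ((((ρ * spinFlip ρ).charpoly.roots).map (fun z => Real.sqrt z.re)).map
        (fun x => (‖R.det‖ / t.re) * x)) := by
    rw [hroots, Multiset.map_map, Multiset.map_map]
    apply Multiset.map_congr rfl
    intro z _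
    simp only [Function.comp_apply]
    rw [show t⁻¹ * star t⁻¹ * star R.det * R.det * z = (γ : ℂ) * z by rw [hcast]]
    rw [show ((γ : ℂ) * z).re = γ * z.re by simp]
    rw [Real.sqrt_mul hγnn', show Real.sqrt γ = ‖R.det‖ / t.re from by
      rw [hγ]; exact Real.sqrt_sq hγnn]
  have hperm : (((ρ' * spinFlip ρ').charpoly.roots).map (fun z => Real.sqrt z.re)).toList.Perm
      ((((ρ * spinFlip ρ).charpoly.roots).map (fun z => Real.sqrt z.re)).toList.map
        (fun x => (‖R.det‖ / t.re) * x)) := by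
    rw [← Multiset.coe_eq_coe, Multiset.coe_toList, ← Multiset.map_coe, Multiset.coe_toList, hms]
  have hconc : concurrence ρ' = (‖R.det‖ / t.re) * concurrence ρ := by
    rw [concurrence_def, concurrence_def]
    exact list_aux _ hγnn _ _ hperm
  refine ⟨by rw [hconc]; ring, fun h => ?_⟩
  rw [hconc]
  have hkpos : 0 < ‖R.det‖ / t.re :=
    div_pos (norm_pos_iff.mpr hdet) htrepos
  exact mul_pos hkpos h
end

section
/- Let ρ be a two-qubit density matrix with C(ρ) > 0, and let R₁,…,Rₙ and W₁,…,Wₙ be 2×2 matrices each with nonzero determinant. Then the state obtained by applying (Rₙ⊗Wₙ)···(R₁⊗W₁) to ρ (conjugation, followed by normalization, assuming the trace is nonzero) has strictly positive concurrence. -/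
open Matrix Complex Kronecker ComplexOrder Polynomial
set_option maxRecDepth 8000

local notation "Mat2" => Matrix (Fin 2) (Fin 2) ℂ
local notation "Mat4" => Matrix (Fin 2 × Fin 2) (Fin 2 × Fin 2) ℂ

lemma map_star_eq (X : Matrix (Fin 2 × Fin 2) (Fin 2 × Fin 2) ℂ) :
    X.map star = (starRingEnd ℂ).mapMatrix X := rfl

lemma map_star_mul_s4 (X Y : Mat4) : (X * Y).map star = X.map star * Y.map star := by
  simp only [map_star_eq, _root_.map_mul]

lemma FF : (pauliY ⊗ₖ pauliY) * (pauliY ⊗ₖ pauliY) = (1 : Mat4) := by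
  rw [← Matrix.mul_kronecker_mul]
  have : pauliY * pauliY = 1 := by
    ext i j
    fin_cases i <;> fin_cases j <;>
      simp [pauliY, Matrix.mul_apply, Fin.sum_univ_two, Matrix.one_apply]
  rw [this, Matrix.one_kronecker_one]

lemma spinFlip_mul (X Y : Mat4) : spinFlip (X * Y) = spinFlip X * spinFlip Y := by
  unfold spinFlip
  rw [map_star_mul_s4]
  have h : X.map star * Y.map star =
      X.map star * ((pauliY ⊗ₖ pauliY) * (pauliY ⊗ₖ pauliY)) * Y.map star := by
    rw [FF, Matrix.mul_one]
  rw [h]; noncomm_ring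

lemma kronecker_map_star (A B : Mat2) :
    (A ⊗ₖ B).map star = (A.map star) ⊗ₖ (B.map star) := by
  ext ⟨i, k⟩ ⟨j, l⟩
  simp [Matrix.map_apply, Matrix.kroneckerMap_apply, star_mul', mul_comm]

lemma YAY (A : Mat2) : pauliY * A.map star * pauliY = adjugate Aᴴ := by
  rw [Matrix.adjugate_fin_two]
  ext i j
  fin_cases i <;> fin_cases j <;>
    simp [pauliY, Matrix.mul_apply, Fin.sum_univ_two, Matrix.map_apply, Matrix.vecMul,
      dotProduct, Matrix.conjTranspose_apply, Matrix.vecHead, Matrix.vecTail] <;> ring_nf <;>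
    simp [Complex.I_sq]

lemma spinFlip_kron (A B : Mat2) :
    spinFlip (A ⊗ₖ B) = adjugate Aᴴ ⊗ₖ adjugate Bᴴ := by
  unfold spinFlip
  rw [kronecker_map_star, ← Matrix.mul_kronecker_mul, ← Matrix.mul_kronecker_mul, YAY, YAY]

lemma kron_conjTranspose (A B : Mat2) : (A ⊗ₖ B)ᴴ = Aᴴ ⊗ₖ Bᴴ := by
  ext ⟨i, k⟩ ⟨j, l⟩
  simp [Matrix.conjTranspose_apply, Matrix.kroneckerMap_apply, star_mul', mul_comm]

/-- The key property preserved under products. -/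
def GoodM (N : Mat4) : Prop :=
  ∃ e : ℂ, e ≠ 0 ∧ Nᴴ * spinFlip N = (star e) • 1 ∧ spinFlip (Nᴴ) * N = e • 1

lemma goodM_one : GoodM (1 : Mat4) := by
  refine ⟨1, one_ne_zero, ?_, ?_⟩ <;>
    simp [spinFlip, Matrix.map_one, FF]

lemma goodM_mul {N₁ N₂ : Mat4} (h1 : GoodM N₁) (h2 : GoodM N₂) : GoodM (N₁ * N₂) := by
  obtain ⟨e₁, he₁, ha₁, hb₁⟩ := h1
  obtain ⟨e₂, he₂, ha₂, hb₂⟩ := h2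
  refine ⟨e₁ * e₂, mul_ne_zero he₁ he₂, ?_, ?_⟩
  · rw [Matrix.conjTranspose_mul, spinFlip_mul]
    calc N₂ᴴ * N₁ᴴ * (spinFlip N₁ * spinFlip N₂)
        = N₂ᴴ * (N₁ᴴ * spinFlip N₁) * spinFlip N₂ := by noncomm_ring
      _ = N₂ᴴ * ((star e₁) • 1) * spinFlip N₂ := by rw [ha₁]
      _ = (star e₁) • (N₂ᴴ * spinFlip N₂) := by
          rw [Matrix.mul_smul, Matrix.mul_one, Matrix.smul_mul]
      _ = (star (e₁ * e₂)) • 1 := by rw [ha₂, smul_smul, StarMul.star_mul, mul_comm (star e₂)]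
  · rw [Matrix.conjTranspose_mul, spinFlip_mul]
    calc spinFlip (N₂ᴴ) * spinFlip (N₁ᴴ) * (N₁ * N₂)
        = spinFlip (N₂ᴴ) * (spinFlip (N₁ᴴ) * N₁) * N₂ := by noncomm_ring
      _ = spinFlip (N₂ᴴ) * (e₁ • 1) * N₂ := by rw [hb₁]
      _ = e₁ • (spinFlip (N₂ᴴ) * N₂) := by
          rw [Matrix.mul_smul, Matrix.mul_one, Matrix.smul_mul]
      _ = (e₁ * e₂) • 1 := by rw [hb₂, smul_smul]

lemma goodM_kron {A B : Mat2} (hA : A.det ≠ 0) (hB : B.det ≠ 0) : GoodM (A ⊗ₖ B) := by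
  refine ⟨A.det * B.det, mul_ne_zero hA hB, ?_, ?_⟩
  · rw [spinFlip_kron, kron_conjTranspose, ← Matrix.mul_kronecker_mul,
      Matrix.mul_adjugate, Matrix.mul_adjugate, Matrix.det_conjTranspose,
      Matrix.det_conjTranspose, Matrix.smul_kronecker, Matrix.kronecker_smul,
      Matrix.one_kronecker_one, smul_smul, ← star_mul']
  · rw [kron_conjTranspose, spinFlip_kron, Matrix.conjTranspose_conjTranspose,
      Matrix.conjTranspose_conjTranspose, ← Matrix.mul_kronecker_mul,
      Matrix.adjugate_mul, Matrix.adjugate_mul, Matrix.smul_kronecker,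
      Matrix.kronecker_smul, Matrix.one_kronecker_one, smul_smul]

lemma goodM_list_prod : ∀ l : List (Mat4), (∀ x ∈ l, GoodM x) → GoodM l.prod := by
  intro l
  induction l with
  | nil => intro _; simpa using goodM_one
  | cons a t ih =>
    intro h
    rw [List.prod_cons]
    exact goodM_mul (h a (List.mem_cons_self)) (ih fun x hx => h x (List.mem_cons_of_mem a hx))

lemma goodM_det_ne_zero {N : Mat4} (h : GoodM N) : N.det ≠ 0 := by
  obtain ⟨e, he, -, hb⟩ := h
  have := congrArg Matrix.det hb
  rw [Matrix.det_mul, Matrix.det_smul, Matrix.det_one] at this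
  intro h0
  rw [h0, mul_zero] at this
  have h4 : e ^ Fintype.card (Fin 2 × Fin 2) = 0 := by
    rw [this]; ring
  exact pow_ne_zero _ he h4

lemma charpoly_eq_of_intertwine {m : Type*} [Fintype m] [DecidableEq m]
    (A B M : Matrix m m ℂ) (hdet : M.det ≠ 0) (h : B * M = M * A) :
    B.charpoly = A.charpoly := by
  have key : charmatrix B * (C : ℂ →+* ℂ[X]).mapMatrix M
      = (C : ℂ →+* ℂ[X]).mapMatrix M * charmatrix A := by
    unfold charmatrix
    rw [Matrix.sub_mul, Matrix.mul_sub]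
    congr 1
    · rw [Matrix.scalar_commute]
      intro r
      exact Commute.all _ _
    · rw [← _root_.map_mul, ← _root_.map_mul, h]
  have hdet' : ((C : ℂ →+* ℂ[X]).mapMatrix M).det ≠ 0 := by
    rw [← RingHom.map_det]
    simpa using hdet
  have := congrArg Matrix.det key
  rw [Matrix.det_mul, Matrix.det_mul] at this
  unfold Matrix.charpoly
  rw [mul_comm] at this
  exact mul_left_cancel₀ hdet' this

lemma roots_charpoly_smul {m : Type*} [Fintype m] [DecidableEq m] [Nontrivial m]
    (c : ℂ) (hc : c ≠ 0) (A : Matrix m m ℂ) :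
    (c • A).charpoly.roots = A.charpoly.roots.map (fun z => c * z) := by
  classical
  set ψ : ℂ[X] →+* ℂ[X] := Polynomial.compRingHom (Polynomial.C c⁻¹ * Polynomial.X) with hψ
  have hchar : charmatrix (c • A) = (Polynomial.C c) • (ψ.mapMatrix (charmatrix A)) := by
    apply Matrix.ext
    intro i j
    have hpsi : ∀ q : ℂ[X], ψ q = q.comp (Polynomial.C c⁻¹ * Polynomial.X) := fun q => rfl
    rw [Matrix.smul_apply, RingHom.mapMatrix_apply, Matrix.map_apply, hpsi, smul_eq_mul]
    by_cases hij : i = j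
    · subst hij
      rw [charmatrix_apply_eq, charmatrix_apply_eq, Polynomial.sub_comp, Polynomial.X_comp,
        Polynomial.C_comp, mul_sub, ← mul_assoc, ← Polynomial.C_mul, mul_inv_cancel₀ hc,
        Polynomial.C_1, one_mul, ← Polynomial.C_mul, Matrix.smul_apply, smul_eq_mul]
    · rw [charmatrix_apply_ne _ _ _ hij, charmatrix_apply_ne _ _ _ hij, Polynomial.neg_comp,
        Polynomial.C_comp, mul_neg, ← Polynomial.C_mul, Matrix.smul_apply, smul_eq_mul]

  have hdet : (c • A).charpoly = (Polynomial.C c) ^ (Fintype.card m) * ψ A.charpoly := by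
    unfold Matrix.charpoly
    rw [hchar, Matrix.det_smul, ← RingHom.map_det]
  set p := A.charpoly with hp
  have hsplits : p.Splits := IsAlgClosed.splits p
  have hmonic : p.Monic := A.charpoly_monic
  have hprod : p = (p.roots.map fun a => Polynomial.X - Polynomial.C a).prod :=
    hsplits.eq_prod_roots_of_monic hmonic
  have hcard : Multiset.card p.roots = Fintype.card m := by
    have h1 := hsplits.natDegree_eq_card_roots.symm
    rw [h1, hp, A.charpoly_natDegree_eq_dim]
  have hfinal : (c • A).charpoly
      = ((p.roots.map fun a => c * a).map fun a => Polynomial.X - Polynomial.C a).prod := by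
    rw [hdet]
    conv_lhs => rw [hprod]
    rw [_root_.map_multiset_prod, Multiset.map_map, ← hcard]
    rw [← Multiset.prod_replicate, ← Multiset.map_const', ← Multiset.prod_map_mul,
      Multiset.map_map]
    congr 1
    apply Multiset.map_congr rfl
    intro a _
    have hpsi : ∀ q : ℂ[X], ψ q = q.comp (Polynomial.C c⁻¹ * Polynomial.X) := fun q => rfl
    show Polynomial.C c * ψ (Polynomial.X - Polynomial.C a) = _
    rw [hpsi, Polynomial.sub_comp, Polynomial.X_comp, Polynomial.C_comp, mul_sub, ← mul_assoc,
      ← Polynomial.C_mul, mul_inv_cancel₀ hc, Polynomial.C_1, one_mul, ← Polynomial.C_mul]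
    simp only [Function.comp_apply]
  rw [hfinal, Polynomial.roots_multiset_prod_X_sub_C]

lemma spinFlip_smul_s4 (a : ℂ) (X : Mat4) : spinFlip (a • X) = (star a) • spinFlip X := by
  unfold spinFlip
  have : (a • X).map star = (star a) • X.map star := by
    ext i j
    simp [Matrix.map_apply]
  rw [this, Matrix.mul_smul, Matrix.smul_mul]

lemma psd_trace_nonneg_s4 {m : Type*} [Fintype m] [DecidableEq m] {P : Matrix m m ℂ}
    (hP : P.PosSemidef) : 0 ≤ P.trace := by
  rw [Matrix.trace]
  apply Finset.sum_nonneg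
  intro i _
  exact hP.diag_nonneg

lemma fold_max_mul (q : ℝ) (hq : 0 ≤ q) (s : Multiset ℝ) :
    (s.map fun x => q * x).fold max 0 = q * s.fold max 0 := by
  induction s using Multiset.induction_on with
  | empty => simp
  | cons a t ih =>
    rw [Multiset.map_cons, Multiset.fold_cons_left, Multiset.fold_cons_left, ih,
      mul_max_of_nonneg _ _ hq]


/-- A finite sequence of local measurement outcomes, all with nonzero determinant,
cannot annihilate two-qubit entanglement (Theorem 1). -/
theorem finite_sequence_nonzero_det_ENATP
    (ρ : Matrix (Fin 2 × Fin 2) (Fin 2 × Fin 2) ℂ)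
    (hpsd : ρ.PosSemidef) (htr : ρ.trace = 1)
    (hent : concurrence ρ > 0)
    (n : ℕ) (R W : Fin n → Matrix (Fin 2) (Fin 2) ℂ)
    (hR : ∀ i, (R i).det ≠ 0) (hW : ∀ i, (W i).det ≠ 0)
    (M : Matrix (Fin 2 × Fin 2) (Fin 2 × Fin 2) ℂ)
    -- M = (Rₙ⊗Wₙ)···(R₁⊗W₁)
    (hM : M = ((List.ofFn fun i : Fin n => (R i ⊗ₖ W i)).reverse).prod)
    (htne : (M * ρ * Mᴴ).trace ≠ 0) :
    concurrence (((M * ρ * Mᴴ).trace)⁻¹ • (M * ρ * Mᴴ)) > 0 := by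
  classical
  have hGood : GoodM M := by
    rw [hM]
    apply goodM_list_prod
    intro x hx
    rw [List.mem_reverse, List.mem_ofFn] at hx
    obtain ⟨i, rfl⟩ := hx
    exact goodM_kron (hR i) (hW i)
  obtain ⟨e, he, hMa, hMb⟩ := hGood
  have hdetM : M.det ≠ 0 := goodM_det_ne_zero ⟨e, he, hMa, hMb⟩
  set ρ' := M * ρ * Mᴴ with hρ'
  set t := ρ'.trace with ht
  have hpsd' : ρ'.PosSemidef := hpsd.mul_mul_conjTranspose_same M
  have htnn : (0 : ℂ) ≤ t := psd_trace_nonneg_s4 hpsd'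
  rw [Complex.le_def] at htnn
  have htim : t.im = 0 := htnn.2.symm
  have htre : 0 < t.re := by
    rcases lt_or_eq_of_le (by simpa using htnn.1) with h | h
    · exact h
    · exfalso; exact htne (by apply Complex.ext <;> simp [← ht, ← h, htim])
  have htr' : t = ((t.re : ℝ) : ℂ) := by apply Complex.ext <;> simp [htim]
  -- key algebraic identity
  have hflip' : spinFlip ρ' = spinFlip M * spinFlip ρ * spinFlip (Mᴴ) := by
    rw [hρ', spinFlip_mul, spinFlip_mul]
  have hkey : ρ' * spinFlip ρ' * M = (star e * e) • (M * (ρ * spinFlip ρ)) := by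
    calc ρ' * spinFlip ρ' * M
        = M * ρ * ((Mᴴ * spinFlip M) * (spinFlip ρ * (spinFlip (Mᴴ) * M))) := by
          rw [hflip', hρ']; noncomm_ring
      _ = M * ρ * ((star e • 1) * (spinFlip ρ * (e • 1))) := by rw [hMa, hMb]
      _ = (star e * e) • (M * (ρ * spinFlip ρ)) := by
          simp only [Matrix.mul_smul, Matrix.smul_mul, Matrix.mul_one, Matrix.one_mul,
            smul_smul, Matrix.mul_assoc, mul_comm e (star e)]
  set σ := t⁻¹ • ρ' with hσ
  set c : ℂ := t⁻¹ * star t⁻¹ * (star e * e) with hc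
  have hB : (σ * spinFlip σ) * M = M * (c • (ρ * spinFlip ρ)) := by
    rw [hσ, spinFlip_smul_s4, Matrix.smul_mul, Matrix.mul_smul, Matrix.smul_mul,
      Matrix.smul_mul, smul_smul, hkey, smul_smul, ← hc, Matrix.mul_smul]
  -- c is a positive real
  set k : ℝ := Complex.normSq e / (t.re) ^ 2 with hk
  have hkpos : 0 < k := by
    apply div_pos
    · exact Complex.normSq_pos.mpr he
    · positivity
  have hcval : c = ((k : ℝ) : ℂ) := by
    have h1 : star e * e = ((Complex.normSq e : ℝ) : ℂ) := by
      rw [mul_comm, Complex.star_def, Complex.mul_conj]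
    have h2 : star t⁻¹ = t⁻¹ := by
      rw [htr', ← Complex.ofReal_inv, Complex.star_def, Complex.conj_ofReal]
    have hrne : ((t.re : ℝ) : ℂ) ≠ 0 := by
      simpa using ne_of_gt htre
    rw [hc, h1, h2, hk, htr']
    push_cast
    simp only [Complex.ofReal_re]
    field_simp
    try ring
    try exact Or.inl trivial
  have hcne : c ≠ 0 := by
    rw [hcval]
    simpa using ne_of_gt hkpos
  -- charpolys
  have hcp : (σ * spinFlip σ).charpoly = (c • (ρ * spinFlip ρ)).charpoly :=
    charpoly_eq_of_intertwine _ _ M hdetM hB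
  have hroots : (σ * spinFlip σ).charpoly.roots
      = (ρ * spinFlip ρ).charpoly.roots.map (fun z => c * z) := by
    rw [hcp, roots_charpoly_smul c hcne]
  -- multiset bookkeeping
  set f : ℂ → ℝ := fun z => Real.sqrt z.re with hf
  set q : ℝ := Real.sqrt k with hq
  have hqpos : 0 < q := Real.sqrt_pos.mpr hkpos
  set mA : Multiset ℝ := (ρ * spinFlip ρ).charpoly.roots.map f with hmA
  set mB : Multiset ℝ := (σ * spinFlip σ).charpoly.roots.map f with hmB
  have hmap : mB = mA.map (fun x => q * x) := by
    rw [hmB, hmA, hroots, Multiset.map_map, Multiset.map_map]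
    apply Multiset.map_congr rfl
    intro z _
    simp only [Function.comp_apply, hf]
    rw [hcval]
    have : (((k : ℝ) : ℂ) * z).re = k * z.re := by simp [Complex.mul_re]
    rw [this, Real.sqrt_mul hkpos.le, hq]
  have hsum : mB.sum = q * mA.sum := by
    rw [hmap]
    have := Multiset.sum_map_mul_left (s := mA) (a := q) (f := id)
    simpa using this
  have hfold : mB.fold max 0 = q * mA.fold max 0 := by
    rw [hmap, fold_max_mul q hqpos.le]
  -- translate lists to multisets
  have list_fold : ∀ (s : Multiset ℝ), s.toList.foldr max 0 = s.fold max 0 := by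
    intro s
    conv_rhs => rw [← Multiset.coe_toList s]
    rw [Multiset.coe_fold_r]
  have list_sum : ∀ (s : Multiset ℝ), s.toList.sum = s.sum := fun s => Multiset.sum_toList s
  -- unfold concurrence
  simp only [concurrence] at hent ⊢
  rw [list_fold, list_sum] at hent ⊢
  rw [← hmB, hfold, hsum]
  rw [← hmA] at hent
  have hA : 0 < 2 * mA.fold max 0 - mA.sum := by
    rcases lt_max_iff.mp hent with h | h
    · exact absurd h (lt_irrefl 0)
    · exact h
  have : 0 < 2 * (q * mA.fold max 0) - q * mA.sum := by
    have : 2 * (q * mA.fold max 0) - q * mA.sum = q * (2 * mA.fold max 0 - mA.sum) := by ring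
    rw [this]
    exact mul_pos hqpos hA
  exact lt_max_iff.mpr (Or.inr this)
end

section
/- For the weak measurement operators A₀ = √((1+ε)/2)|0⟩⟨0| + √((1−ε)/2)|1⟩⟨1| and A₁ = √((1−ε)/2)|0⟩⟨0| + √((1+ε)/2)|1⟩⟨1| with 0 ≤ ε < 1, a pure two-qubit state |ψ⟩ = a|00⟩+b|01⟩+c|10⟩+d|11⟩, and the unnormalized n-round unrecorded-outcome output ψₙ = Σ_{m=0}^{n} C(n,m) (A₀^m A₁^{n−m}⊗I)|ψ⟩⟨ψ|(A₀^m A₁^{n−m}⊗I), the Wootters concurrence of ψₙ (which has unit trace) equals (1−ε²)^{n/2} · 2|ad − bc|. -/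
set_option maxHeartbeats 4000000

open Matrix Kronecker

noncomputable def A0 (ε : ℝ) : Matrix (Fin 2) (Fin 2) ℂ :=
  !![(Real.sqrt ((1 + ε) / 2) : ℂ), 0; 0, (Real.sqrt ((1 - ε) / 2) : ℂ)]

noncomputable def A1 (ε : ℝ) : Matrix (Fin 2) (Fin 2) ℂ :=
  !![(Real.sqrt ((1 - ε) / 2) : ℂ), 0; 0, (Real.sqrt ((1 + ε) / 2) : ℂ)]

lemma detFinFour (M : Matrix (Fin 4) (Fin 4) ℂ) : M.det =
    M 0 0 * (M 1 1 * (M 2 2 * M 3 3 - M 2 3 * M 3 2) - M 1 2 * (M 2 1 * M 3 3 - M 2 3 * M 3 1)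
      + M 1 3 * (M 2 1 * M 3 2 - M 2 2 * M 3 1))
  - M 0 1 * (M 1 0 * (M 2 2 * M 3 3 - M 2 3 * M 3 2) - M 1 2 * (M 2 0 * M 3 3 - M 2 3 * M 3 0)
      + M 1 3 * (M 2 0 * M 3 2 - M 2 2 * M 3 0))
  + M 0 2 * (M 1 0 * (M 2 1 * M 3 3 - M 2 3 * M 3 1) - M 1 1 * (M 2 0 * M 3 3 - M 2 3 * M 3 0)
      + M 1 3 * (M 2 0 * M 3 1 - M 2 1 * M 3 0))
  - M 0 3 * (M 1 0 * (M 2 1 * M 3 2 - M 2 2 * M 3 1) - M 1 1 * (M 2 0 * M 3 2 - M 2 2 * M 3 0)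
      + M 1 2 * (M 2 0 * M 3 1 - M 2 1 * M 3 0)) := by
  rw [Matrix.det_succ_row_zero]
  simp [Fin.sum_univ_succ, Matrix.det_fin_three, Matrix.submatrix_apply, Fin.succAbove,
    show (Fin.succ 2 : Fin 4) = 3 from rfl, show Fin.castSucc (2:Fin 3) = (2 : Fin 4) from by decide]
  ring

lemma evalCharpoly (M : Matrix (Fin 4) (Fin 4) ℂ) (r : ℂ) :
    M.charpoly.eval r = (r • (1 : Matrix (Fin 4) (Fin 4) ℂ) - M).det := by
  rw [Matrix.charpoly, ← Polynomial.coe_evalRingHom, RingHom.map_det]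
  congr 1
  ext i j
  by_cases h : i = j
  · subst h
    simp [Matrix.charmatrix_apply_eq, Matrix.one_apply, Matrix.sub_apply, Matrix.smul_apply]
  · simp [Matrix.charmatrix_apply_ne _ _ _ h, Matrix.one_apply_ne h, Matrix.sub_apply,
      Matrix.smul_apply]

open Polynomial in
lemma charpolyG (a b c d S T : ℂ) :
    (!![2*S*a*((1+T^2)/2*d), 2*S*a*(-((1+T^2)/2*c)), 2*S*a*(-(T*b)), 2*S*a*(T*a);
       2*S*b*((1+T^2)/2*d), 2*S*b*(-((1+T^2)/2*c)), 2*S*b*(-(T*b)), 2*S*b*(T*a);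
       2*S*c*(T*d), 2*S*c*(-(T*c)), 2*S*c*(-((1+T^2)/2*b)), 2*S*c*((1+T^2)/2*a);
       2*S*d*(T*d), 2*S*d*(-(T*c)), 2*S*d*(-((1+T^2)/2*b)), 2*S*d*((1+T^2)/2*a)] :
      Matrix (Fin 4) (Fin 4) ℂ).charpoly
    = X^2 * (X - C ((1+T)^2*((a*d-b*c)*S))) * (X - C ((1-T)^2*((a*d-b*c)*S))) := by
  apply Polynomial.funext
  intro r
  rw [evalCharpoly, detFinFour]
  simp only [Matrix.smul_apply, Matrix.one_apply, Matrix.sub_apply, Matrix.cons_val',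
    Matrix.cons_val_zero, Matrix.cons_val_one, Matrix.head_cons, Matrix.empty_val',
    Matrix.cons_val_fin_one, Matrix.head_fin_const, Matrix.cons_val_two, Matrix.cons_val_three,
    Matrix.tail_cons, Matrix.of_apply, smul_eq_mul, eval_mul, eval_pow, eval_sub, eval_X,
    eval_C, if_true, if_false]
  simp only [Fin.reduceEq, reduceIte, mul_one, mul_zero, sub_zero, zero_sub]
  ring

/-- After n rounds of the weak measurement on the first qubit with unrecorded
outcomes, the concurrence of the output is (1−ε²)^(n/2) · 2|ad − bc| (Lemma 2). -/
theorem unrecorded_weak_measurement_concurrence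
    (ε : ℝ) (hε0 : 0 ≤ ε) (hε1 : ε < 1)
    (a b c d : ℂ)
    (hnorm : Complex.normSq a + Complex.normSq b + Complex.normSq c
      + Complex.normSq d = 1)
    (ψ : Fin 2 × Fin 2 → ℂ)
    (hψ : ψ = fun p => !![a, b; c, d] p.1 p.2)
    (n : ℕ)
    (ψn : Matrix (Fin 2 × Fin 2) (Fin 2 × Fin 2) ℂ)
    (hψn : ψn = ∑ m ∈ Finset.range (n + 1), (n.choose m : ℂ) •
      (((A0 ε ^ m * A1 ε ^ (n - m)) ⊗ₖ (1 : Matrix (Fin 2) (Fin 2) ℂ)) *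
        vecMulVec ψ (star ψ) *
       ((A0 ε ^ m * A1 ε ^ (n - m)) ⊗ₖ (1 : Matrix (Fin 2) (Fin 2) ℂ)))) :
    concurrence ψn = (1 - ε ^ 2) ^ ((n : ℝ) / 2) * (2 * ‖a * d - b * c‖) := by
  set p : ℝ := Real.sqrt ((1 + ε) / 2) with hp
  set q : ℝ := Real.sqrt ((1 - ε) / 2) with hq
  set t : ℝ := Real.sqrt (1 - ε^2) ^ n with htdef
  have h1e : (0:ℝ) < 1 - ε^2 := by nlinarith
  have hp2 : p^2 = (1 + ε) / 2 := Real.sq_sqrt (by linarith)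
  have hq2 : q^2 = (1 - ε) / 2 := Real.sq_sqrt (by linarith)
  have hpq : p * q + p * q = Real.sqrt (1 - ε^2) := by
    rw [hp, hq, ← Real.sqrt_mul (by linarith)]
    rw [show (1+ε)/2 * ((1-ε)/2) = (1 - ε^2)/4 by ring]
    rw [show (1 - ε^2)/4 = (1-ε^2) * (1/4) by ring, Real.sqrt_mul (by nlinarith)]
    rw [show Real.sqrt (1/4) = 1/2 by
      rw [show (1/4 : ℝ) = (1/2)^2 by norm_num, Real.sqrt_sq (by norm_num)]]
    ring
  have ht0 : 0 ≤ t := pow_nonneg (Real.sqrt_nonneg _) n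
  have ht1 : t ≤ 1 := pow_le_one₀ (Real.sqrt_nonneg _) (Real.sqrt_le_one.mpr (by nlinarith))
  -- Step 1: closed form of ψn
  set vm : ℕ → Fin 2 → ℂ := fun m => ![(p:ℂ)^m * (q:ℂ)^(n-m), (q:ℂ)^m * (p:ℂ)^(n-m)] with hvm
  have hA0 : A0 ε = Matrix.diagonal ![(p:ℂ), (q:ℂ)] := by
    ext i j; fin_cases i <;> fin_cases j <;> simp [A0, hp, hq, Matrix.diagonal_apply]
  have hA1 : A1 ε = Matrix.diagonal ![(q:ℂ), (p:ℂ)] := by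
    ext i j; fin_cases i <;> fin_cases j <;> simp [A1, hp, hq, Matrix.diagonal_apply]
  have hK : ∀ m : ℕ, (A0 ε ^ m * A1 ε ^ (n - m)) ⊗ₖ (1 : Matrix (Fin 2) (Fin 2) ℂ)
      = Matrix.diagonal (fun k : Fin 2 × Fin 2 => vm m k.1) := by
    intro m
    rw [hA0, hA1, Matrix.diagonal_pow, Matrix.diagonal_pow, Matrix.diagonal_mul_diagonal,
      show (1 : Matrix (Fin 2) (Fin 2) ℂ) = Matrix.diagonal (fun _ => 1) from
        Matrix.diagonal_one.symm,
      Matrix.diagonal_kronecker_diagonal]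
    refine congrArg Matrix.diagonal (funext fun k => ?_)
    obtain ⟨i, α⟩ := k
    fin_cases i <;> simp [hvm]
  have hb : ∀ x y : ℝ, ∑ m ∈ Finset.range (n+1), (n.choose m : ℝ) * (x^m * y^(n-m))
      = (x+y)^n := by
    intro x y
    rw [add_pow]
    exact Finset.sum_congr rfl fun m _ => by ring
  have h00 : ∑ m ∈ Finset.range (n+1), (n.choose m : ℂ) * (vm m 0 * vm m 0) = 1 := by
    have hc : ∀ m ∈ Finset.range (n+1), (n.choose m : ℂ) * (vm m 0 * vm m 0)
        = (((n.choose m : ℝ) * ((p^2)^m * (q^2)^(n-m)) : ℝ) : ℂ) := fun m _ => by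
      show (n.choose m : ℂ) * ((p:ℂ)^m * (q:ℂ)^(n-m) * ((p:ℂ)^m * (q:ℂ)^(n-m))) = _
      push_cast; ring
    rw [Finset.sum_congr rfl hc, ← Complex.ofReal_sum, hb, hp2, hq2,
      show ((1:ℝ)+ε)/2 + (1-ε)/2 = 1 by ring]; norm_num
  have h11 : ∑ m ∈ Finset.range (n+1), (n.choose m : ℂ) * (vm m 1 * vm m 1) = 1 := by
    have hc : ∀ m ∈ Finset.range (n+1), (n.choose m : ℂ) * (vm m 1 * vm m 1)
        = (((n.choose m : ℝ) * ((q^2)^m * (p^2)^(n-m)) : ℝ) : ℂ) := fun m _ => by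
      show (n.choose m : ℂ) * ((q:ℂ)^m * (p:ℂ)^(n-m) * ((q:ℂ)^m * (p:ℂ)^(n-m))) = _
      push_cast; ring
    rw [Finset.sum_congr rfl hc, ← Complex.ofReal_sum, hb, hp2, hq2,
      show ((1:ℝ)-ε)/2 + (1+ε)/2 = 1 by ring]; norm_num
  have h01 : ∑ m ∈ Finset.range (n+1), (n.choose m : ℂ) * (vm m 0 * vm m 1) = (t:ℂ) := by
    have hc : ∀ m ∈ Finset.range (n+1), (n.choose m : ℂ) * (vm m 0 * vm m 1)
        = (((n.choose m : ℝ) * ((p*q)^m * ((p*q))^(n-m)) : ℝ) : ℂ) := fun m _ => by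
      show (n.choose m : ℂ) * ((p:ℂ)^m * (q:ℂ)^(n-m) * ((q:ℂ)^m * (p:ℂ)^(n-m))) = _
      push_cast; ring
    rw [Finset.sum_congr rfl hc, ← Complex.ofReal_sum, hb, hpq]
  have h10 : ∑ m ∈ Finset.range (n+1), (n.choose m : ℂ) * (vm m 1 * vm m 0) = (t:ℂ) := by
    have hc : ∀ m ∈ Finset.range (n+1), (n.choose m : ℂ) * (vm m 1 * vm m 0)
        = (((n.choose m : ℝ) * ((p*q)^m * ((p*q))^(n-m)) : ℝ) : ℂ) := fun m _ => by
      show (n.choose m : ℂ) * ((q:ℂ)^m * (p:ℂ)^(n-m) * ((p:ℂ)^m * (q:ℂ)^(n-m))) = _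
      push_cast; ring
    rw [Finset.sum_congr rfl hc, ← Complex.ofReal_sum, hb, hpq]
  have hsum : ∀ i j : Fin 2, ∑ m ∈ Finset.range (n+1),
      (n.choose m : ℂ) * (vm m i * vm m j) = if i = j then 1 else (t:ℂ) := by
    intro i j
    fin_cases i <;> fin_cases j
    · simpa using h00
    · simpa using h01
    · simpa using h10
    · simpa using h11
  have hE : ψn = Matrix.of fun k l => (if k.1 = l.1 then (1:ℂ) else (t:ℂ))
      * (ψ k * star (ψ l)) := by
    rw [hψn]
    ext k l
    rw [Matrix.sum_apply]
    simp only [hK, Matrix.smul_apply, Matrix.diagonal_mul, Matrix.mul_diagonal,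
      Matrix.vecMulVec_apply, smul_eq_mul, Pi.star_apply, Matrix.of_apply]
    rw [Finset.sum_congr rfl (fun m _ => show
        (n.choose m : ℂ) * (vm m k.1 * (ψ k * star (ψ l)) * vm m l.1)
        = ((n.choose m : ℂ) * (vm m k.1 * vm m l.1)) * (ψ k * star (ψ l)) from by ring),
      ← Finset.sum_mul, hsum k.1 l.1]
  -- Step 2: the matrix ψn * spinFlip ψn, reindexed to Fin 4
  set T : ℂ := (t : ℂ) with hT
  have he0 : (finProdFinEquiv.symm (0 : Fin (2*2)) : Fin 2 × Fin 2) = (0,0) := rfl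
  have he1 : (finProdFinEquiv.symm (1 : Fin (2*2)) : Fin 2 × Fin 2) = (0,1) := rfl
  have he2 : (finProdFinEquiv.symm (2 : Fin (2*2)) : Fin 2 × Fin 2) = (1,0) := rfl
  have he3 : (finProdFinEquiv.symm (3 : Fin (2*2)) : Fin 2 × Fin 2) = (1,1) := rfl
  have h1 : Matrix.reindex finProdFinEquiv finProdFinEquiv ψn
      = (!![a * star a, a * star b, T * (a * star c), T * (a * star d);
       b * star a, b * star b, T * (b * star c), T * (b * star d);
       T * (c * star a), T * (c * star b), c * star c, c * star d;
       T * (d * star a), T * (d * star b), d * star c, d * star d] : Matrix (Fin 4) (Fin 4) ℂ) := by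
    rw [hE, hψ]
    ext i j
    fin_cases i <;> fin_cases j <;>
      simp [Matrix.reindex_apply, Matrix.submatrix_apply, he0, he1, he2, he3]
  have h2 : Matrix.reindex finProdFinEquiv finProdFinEquiv (pauliY ⊗ₖ pauliY)
      = (!![0,0,0,-1; 0,0,1,0; 0,1,0,0; -1,0,0,0] : Matrix (Fin 4) (Fin 4) ℂ) := by
    ext i j
    fin_cases i <;> fin_cases j <;>
      simp [Matrix.reindex_apply, Matrix.submatrix_apply, he0, he1, he2, he3, pauliY,
        Matrix.kroneckerMap_apply, Complex.I_mul_I, Matrix.vecHead, Matrix.vecTail]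
  have hTstar : (starRingEnd ℂ) T = T := by rw [hT]; exact Complex.conj_ofReal t
  have h3 : Matrix.reindex finProdFinEquiv finProdFinEquiv (ψn.map star)
      = (!![star a * a, star a * b, T * (star a * c), T * (star a * d);
       star b * a, star b * b, T * (star b * c), T * (star b * d);
       T * (star c * a), T * (star c * b), star c * c, star c * d;
       T * (star d * a), T * (star d * b), star d * c, star d * d] : Matrix (Fin 4) (Fin 4) ℂ) := by
    rw [hE, hψ]
    ext i j
    fin_cases i <;> fin_cases j <;>
      simp [Matrix.reindex_apply, Matrix.submatrix_apply, he0, he1, he2, he3, hTstar,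
        Matrix.map_apply, star_mul', star_star, Complex.star_def, Complex.conj_ofReal, mul_comm]
  have hmul : ∀ A B : Matrix (Fin 2 × Fin 2) (Fin 2 × Fin 2) ℂ,
      Matrix.reindex finProdFinEquiv finProdFinEquiv (A * B)
      = Matrix.reindex finProdFinEquiv finProdFinEquiv A
        * Matrix.reindex finProdFinEquiv finProdFinEquiv B := by
    intro A B
    simp only [Matrix.reindex_apply]
    rw [Matrix.submatrix_mul_equiv]
  have hN : Matrix.reindex finProdFinEquiv finProdFinEquiv (ψn * spinFlip ψn) =
      (!![2*(star (a*d-b*c))*a*((1+T^2)/2*d), 2*(star (a*d-b*c))*a*(-((1+T^2)/2*c)), 2*(star (a*d-b*c))*a*(-(T*b)), 2*(star (a*d-b*c))*a*(T*a);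
       2*(star (a*d-b*c))*b*((1+T^2)/2*d), 2*(star (a*d-b*c))*b*(-((1+T^2)/2*c)), 2*(star (a*d-b*c))*b*(-(T*b)), 2*(star (a*d-b*c))*b*(T*a);
       2*(star (a*d-b*c))*c*(T*d), 2*(star (a*d-b*c))*c*(-(T*c)), 2*(star (a*d-b*c))*c*(-((1+T^2)/2*b)), 2*(star (a*d-b*c))*c*((1+T^2)/2*a);
       2*(star (a*d-b*c))*d*(T*d), 2*(star (a*d-b*c))*d*(-(T*c)), 2*(star (a*d-b*c))*d*(-((1+T^2)/2*b)), 2*(star (a*d-b*c))*d*((1+T^2)/2*a)] : Matrix (Fin 4) (Fin 4) ℂ) := by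
    rw [show ψn * spinFlip ψn
        = ψn * ((pauliY ⊗ₖ pauliY) * ψn.map star * (pauliY ⊗ₖ pauliY)) from rfl]
    rw [hmul, hmul, hmul, h1, h2, h3]
    ext i j
    fin_cases i <;> fin_cases j <;>
      (simp [Matrix.mul_apply, Fin.sum_univ_four, star_sub, star_mul'] <;> ring)
  -- Step 3: the characteristic polynomial
  set D : ℂ := a*d - b*c with hD
  have hmu1R : (1+T)^2 * (D * star D)
      = ((((1+t)^2 * Complex.normSq D : ℝ)) : ℂ) := by
    rw [show star D = (starRingEnd ℂ) D from rfl, Complex.mul_conj]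
    push_cast; ring
  have hmu2R : (1-T)^2 * (D * star D)
      = ((((1-t)^2 * Complex.normSq D : ℝ)) : ℂ) := by
    rw [show star D = (starRingEnd ℂ) D from rfl, Complex.mul_conj]
    push_cast; ring
  have hcp : (ψn * spinFlip ψn).charpoly
      = Polynomial.X^2
        * (Polynomial.X - Polynomial.C ((((1+t)^2 * Complex.normSq D : ℝ)) : ℂ))
        * (Polynomial.X - Polynomial.C ((((1-t)^2 * Complex.normSq D : ℝ)) : ℂ)) := by
    rw [← Matrix.charpoly_reindex finProdFinEquiv (ψn * spinFlip ψn), hN, ← hmu1R, ← hmu2R]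
    exact charpolyG a b c d (star D) T
  -- Step 4: the roots
  have hroots : (ψn * spinFlip ψn).charpoly.roots
      = 2 • ({(0:ℂ)} : Multiset ℂ) + {((((1+t)^2 * Complex.normSq D : ℝ)) : ℂ)}
        + {((((1-t)^2 * Complex.normSq D : ℝ)) : ℂ)} := by
    rw [hcp, Polynomial.roots_mul (((Polynomial.monic_X_pow 2).mul
        (Polynomial.monic_X_sub_C _)).mul (Polynomial.monic_X_sub_C _)).ne_zero,
      Polynomial.roots_mul ((Polynomial.monic_X_pow 2).mul
        (Polynomial.monic_X_sub_C _)).ne_zero,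
      Polynomial.roots_pow, Polynomial.roots_X, Polynomial.roots_X_sub_C,
      Polynomial.roots_X_sub_C]
  set AD : ℝ := ‖D‖ with hAD
  have hAD0 : 0 ≤ AD := by rw [hAD]; exact norm_nonneg D
  have hsqAD : Real.sqrt (Complex.normSq D) = AD := by
    rw [hAD, Complex.norm_def]
  have hf1 : Real.sqrt (((((1+t)^2 * Complex.normSq D : ℝ)) : ℂ)).re = (1+t) * AD := by
    rw [Complex.ofReal_re, Real.sqrt_mul (sq_nonneg _), Real.sqrt_sq (by linarith), hsqAD]
  have hf2 : Real.sqrt (((((1-t)^2 * Complex.normSq D : ℝ)) : ℂ)).re = (1-t) * AD := by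
    rw [Complex.ofReal_re, Real.sqrt_mul (sq_nonneg _), Real.sqrt_sq (by linarith), hsqAD]
  have hmap : (((ψn * spinFlip ψn).charpoly.roots).map (fun z => Real.sqrt z.re))
      = (↑[(0:ℝ), 0, (1+t)*AD, (1-t)*AD] : Multiset ℝ) := by
    rw [hroots]
    simp only [Multiset.map_add, Multiset.map_nsmul, Multiset.map_singleton]
    rw [show Real.sqrt ((0:ℂ)).re = 0 by simp, hf1, hf2, two_nsmul]
    rfl
  have hperm : ((((ψn * spinFlip ψn).charpoly.roots).map
        (fun z => Real.sqrt z.re)).toList).Perm [(0:ℝ), 0, (1+t)*AD, (1-t)*AD] := by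
    apply Multiset.coe_eq_coe.mp
    rw [Multiset.coe_toList, hmap]
  -- Step 5: conclusion
  show max 0 (2 * List.foldr max 0 ((((ψn * spinFlip ψn).charpoly.roots).map
      (fun z => Real.sqrt z.re)).toList)
    - ((((ψn * spinFlip ψn).charpoly.roots).map (fun z => Real.sqrt z.re)).toList).sum) = _
  rw [hperm.foldr_op_eq, hperm.sum_eq]
  simp only [List.foldr_cons, List.foldr_nil, List.sum_cons, List.sum_nil]
  rw [max_eq_left (by nlinarith : (0:ℝ) ≤ (1-t)*AD),
    max_eq_left (by nlinarith : (1-t)*AD ≤ (1+t)*AD),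
    max_eq_right (by nlinarith : (0:ℝ) ≤ (1+t)*AD),
    max_eq_right (by nlinarith : (0:ℝ) ≤ (1+t)*AD)]
  rw [show 2 * ((1+t)*AD) - (0 + (0 + ((1+t)*AD + ((1-t)*AD + 0)))) = t * (2 * AD) by ring]
  rw [max_eq_right (by nlinarith : (0:ℝ) ≤ t * (2*AD))]
  have hrp : (1 - ε^2) ^ ((n:ℝ)/2) = t := by
    rw [show ((n:ℝ)/2) = (1/2) * (n:ℝ) by ring, Real.rpow_mul (le_of_lt h1e),
      ← Real.sqrt_eq_rpow, Real.rpow_natCast, htdef]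
  rw [hrp, hAD, hD]
end

section
/- With A₀, A₁ as above (0 ≤ ε < 1) and an initially entangled pure two-qubit state |ψ⟩ (C(|ψ⟩) > 0), the unrecorded-outcome post-measurement state ψₙ after any finite number n of rounds of measurement on the first qubit has strictly positive concurrence; C(ψₙ) = 0 only if ε = 1 or in the limit n → ∞. -/
open Matrix Kronecker

/-! ### Auxiliary machinery -/

section Aux

open Polynomial

local notation "Q" => (Fin 2 × Fin 2 : Type)

/-- Characteristic polynomials of `A * B` and `B * A` agree. -/
theorem charpoly_mul_comm' {q : Type*} [Fintype q] [DecidableEq q] (A B : Matrix q q ℂ) :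
    (A * B).charpoly = (B * A).charpoly := by
  classical
  set x : Polynomial ℂ := Polynomial.X
  set A' : Matrix q q (Polynomial ℂ) := A.map C with hA'
  set B' : Matrix q q (Polynomial ℂ) := B.map C with hB'
  have key1 : (fromBlocks (x • 1) A' B' 1).det = (x • 1 - A' * B').det := by
    have h : fromBlocks (x • 1) A' B' 1 * fromBlocks 1 0 (-B') 1
        = fromBlocks (x • 1 - A' * B') A' 0 1 := by
      rw [fromBlocks_multiply]; congr 1 <;> simp [sub_eq_add_neg, mul_neg, add_comm]
    have := congrArg Matrix.det h
    rw [det_mul, det_fromBlocks_zero₁₂, det_fromBlocks_zero₂₁] at this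
    simpa using this
  have key2 : (fromBlocks 1 A' B' (x • 1)).det = (x • 1 - B' * A').det := by
    have h : fromBlocks 1 0 (-B') 1 * fromBlocks 1 A' B' (x • 1)
        = fromBlocks 1 A' 0 (x • 1 - B' * A') := by
      rw [fromBlocks_multiply]; congr 1 <;> simp [sub_eq_add_neg, mul_neg, add_comm]
    have := congrArg Matrix.det h
    rw [det_mul, det_fromBlocks_zero₁₂, det_fromBlocks_zero₂₁] at this
    simpa using this
  have key3 : x ^ Fintype.card q * (fromBlocks (x • 1) A' B' 1).det
      = x ^ Fintype.card q * (fromBlocks 1 A' B' (x • 1)).det := by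
    have h : fromBlocks (x • 1) A' B' 1 * fromBlocks 1 0 0 (x • 1)
        = fromBlocks ((x • 1) : Matrix q q (Polynomial ℂ)) 0 0 1 * fromBlocks 1 A' B' (x • 1) := by
      rw [fromBlocks_multiply, fromBlocks_multiply]
      congr 1 <;> simp [Matrix.mul_smul, Matrix.smul_mul]
    have := congrArg Matrix.det h
    rw [det_mul, det_mul, det_fromBlocks_zero₁₂, det_fromBlocks_zero₂₁] at this
    simp only [det_one, one_mul, mul_one, det_smul, smul_eq_mul, Finset.prod_const,
      Finset.card_univ] at this
    linear_combination this
  have hxne : x ^ Fintype.card q ≠ 0 := pow_ne_zero _ Polynomial.X_ne_zero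
  have hdet : (x • 1 - A' * B').det = (x • 1 - B' * A').det := by
    have := key3
    rw [key1, key2] at this
    exact mul_left_cancel₀ hxne this
  have hch : ∀ (M : Matrix q q ℂ),
      M.charpoly = (x • (1 : Matrix q q (Polynomial ℂ)) - M.map C).det := by
    intro M
    unfold Matrix.charpoly Matrix.charmatrix
    congr 1
    ext i j
    by_cases h : i = j <;>
      simp [h, x, Matrix.scalar_apply, Matrix.smul_apply, Matrix.one_apply, Matrix.diagonal_apply]
  rw [hch, hch, Matrix.map_mul, Matrix.map_mul, ← hA', ← hB', hdet]

theorem charpoly_diagonal' {q : Type*} [Fintype q] [DecidableEq q] (d : q → ℂ) :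
    (Matrix.diagonal d).charpoly = ∏ i, (X - C (d i)) := by
  unfold Matrix.charpoly
  have : charmatrix (Matrix.diagonal d) = Matrix.diagonal (fun i => X - C (d i)) := by
    ext i j
    by_cases h : i = j
    · subst h; simp
    · simp [h, Matrix.diagonal_apply_ne _ h]
  rw [this, det_diagonal]

theorem roots_charpoly_diagonal {q : Type*} [Fintype q] [DecidableEq q] (d : q → ℂ) :
    (Matrix.diagonal d).charpoly.roots = Finset.univ.val.map d := by
  rw [charpoly_diagonal', Finset.prod_eq_multiset_prod]
  have : Multiset.map (fun i => X - C (d i)) Finset.univ.val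
      = Multiset.map (fun a => X - C a) (Finset.univ.val.map d) := by
    rw [Multiset.map_map]; rfl
  rw [this]
  exact roots_multiset_prod_X_sub_C _

/-- Evaluate the concurrence given the four eigenvalues `a², b², 0, 0`. -/
theorem concurrence_eval (ρ : Matrix Q Q ℂ) (a b : ℝ)
    (hb : 0 ≤ b) (hab : b ≤ a)
    (h : (ρ * spinFlip ρ).charpoly.roots = {((a^2 : ℝ) : ℂ), ((b^2 : ℝ) : ℂ), 0, 0}) :
    concurrence ρ = a - b := by
  have ha : 0 ≤ a := le_trans hb hab
  unfold concurrence
  rw [h]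
  have hmap : (Multiset.map (fun z => Real.sqrt z.re)
      ({((a^2 : ℝ) : ℂ), ((b^2 : ℝ) : ℂ), 0, 0} : Multiset ℂ)) = {a, b, 0, 0} := by
    simp [← Complex.ofReal_pow, Complex.ofReal_re, Real.sqrt_sq ha, Real.sqrt_sq hb]
  rw [hmap]
  set M : Multiset ℝ := {a, b, 0, 0} with hM
  have hsum : M.toList.sum = a + b := by
    rw [Multiset.sum_toList]; simp [hM]
  have hfold : M.toList.foldr max 0 = a := by
    have h1 : M.toList.foldr max 0 = Multiset.fold max 0 M := by
      conv_rhs => rw [← Multiset.coe_toList M]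
      rw [Multiset.coe_fold_r]
    rw [h1, hM]
    simp only [Multiset.insert_eq_cons, Multiset.fold_cons_left, Multiset.fold_singleton]
    simp only [sup_idem]
    rw [sup_eq_left.mpr hb, sup_eq_left.mpr hab]
  show (0 ⊔ (2 * List.foldr max 0 M.toList - M.toList.sum)) = a - b
  rw [hsum, hfold, sup_eq_right.mpr (by linarith : (0:ℝ) ≤ 2 * a - (a + b))]
  ring

lemma mul_vecMulVec' (M : Matrix Q Q ℂ) (a b : Q → ℂ) :
    M * vecMulVec a b = vecMulVec (M.mulVec a) b := by
  ext p r
  simp [Matrix.mul_apply, vecMulVec_apply, Matrix.mulVec, dotProduct,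
    Finset.sum_mul, mul_assoc]

lemma vecMulVec_mul' (a b : Q → ℂ) (M : Matrix Q Q ℂ) :
    vecMulVec a b * M = vecMulVec a (Matrix.vecMul b M) := by
  ext p r
  simp [Matrix.mul_apply, vecMulVec_apply, Matrix.vecMul, dotProduct,
    Finset.mul_sum, mul_assoc]

lemma vecMulVec_mul_vecMulVec' (a b c d : Q → ℂ) :
    vecMulVec a b * vecMulVec c d = (b ⬝ᵥ c) • vecMulVec a d := by
  ext p r
  simp only [Matrix.mul_apply, vecMulVec_apply, dotProduct, Matrix.smul_apply,
    Finset.sum_mul, smul_eq_mul, Finset.mul_sum]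
  apply Finset.sum_congr rfl
  intros; ring

lemma pauliY_star (i k : Fin 2) : star (pauliY i k) = pauliY k i := by
  fin_cases i <;> fin_cases k <;> simp [pauliY]

noncomputable def tildeVec (w : Q → ℂ) : Q → ℂ := (pauliY ⊗ₖ pauliY).mulVec (star w)

lemma spinFlip_pure (w : Q → ℂ) :
    spinFlip (vecMulVec w (star w)) = vecMulVec (tildeVec w) (star (tildeVec w)) := by
  unfold spinFlip
  have h1 : (vecMulVec w (star w)).map star = vecMulVec (star w) w := by
    ext p r
    simp [vecMulVec_apply, Matrix.map_apply, mul_comm]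
  have h2 : Matrix.vecMul w (pauliY ⊗ₖ pauliY) = star (tildeVec w) := by
    ext p
    simp only [Matrix.vecMul, dotProduct, Pi.star_apply, tildeVec, Matrix.mulVec]
    rw [star_sum]
    apply Finset.sum_congr rfl
    intro r _
    simp only [star_mul', star_star]
    rw [show star ((pauliY ⊗ₖ pauliY) p r) = (pauliY ⊗ₖ pauliY) r p by
      rcases p with ⟨i, j⟩; rcases r with ⟨k, l⟩
      simp [Matrix.kroneckerMap_apply, star_mul', pauliY_star]]
    ring
  rw [h1, mul_vecMulVec', vecMulVec_mul', h2]
  rfl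

noncomputable def vFlip (ψ : Q → ℂ) : Q → ℂ := fun p => if p.1 = 0 then ψ p else -ψ p

noncomputable def sVal (ψ : Q → ℂ) : ℂ :=
  -2 * (ψ (0,0) * ψ (1,1) - ψ (0,1) * ψ (1,0))

lemma tildeVec_apply (w : Q → ℂ) (p : Q) :
    tildeVec w p = ∑ r : Q, (pauliY p.1 r.1 * pauliY p.2 r.2) * star (w r) := by
  simp [tildeVec, Matrix.mulVec, dotProduct, Matrix.kroneckerMap_apply]

lemma tv00 (w : Q → ℂ) : tildeVec w (0,0) = -star (w (1,1)) := by
  simp [tildeVec_apply, Fintype.sum_prod_type, Fin.sum_univ_two, pauliY]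
lemma tv01 (w : Q → ℂ) : tildeVec w (0,1) = star (w (1,0)) := by
  simp [tildeVec_apply, Fintype.sum_prod_type, Fin.sum_univ_two, pauliY]
lemma tv10 (w : Q → ℂ) : tildeVec w (1,0) = star (w (0,1)) := by
  simp [tildeVec_apply, Fintype.sum_prod_type, Fin.sum_univ_two, pauliY]
lemma tv11 (w : Q → ℂ) : tildeVec w (1,1) = -star (w (0,0)) := by
  simp [tildeVec_apply, Fintype.sum_prod_type, Fin.sum_univ_two, pauliY]

lemma dot_expand (a b : Q → ℂ) :
    a ⬝ᵥ b = a (0,0) * b (0,0) + a (0,1) * b (0,1) + a (1,0) * b (1,0) + a (1,1) * b (1,1) := by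
  simp [dotProduct, Fintype.sum_prod_type, Fin.sum_univ_two]; ring

lemma vF00 (ψ : Q → ℂ) : vFlip ψ (0,0) = ψ (0,0) := rfl
lemma vF01 (ψ : Q → ℂ) : vFlip ψ (0,1) = ψ (0,1) := rfl
lemma vF10 (ψ : Q → ℂ) : vFlip ψ (1,0) = -ψ (1,0) := rfl
lemma vF11 (ψ : Q → ℂ) : vFlip ψ (1,1) = -ψ (1,1) := rfl

lemma dot1 (ψ : Q → ℂ) : star ψ ⬝ᵥ tildeVec ψ = star (sVal ψ) := by
  rw [dot_expand]
  simp only [Pi.star_apply, tv00, tv01, tv10, tv11, sVal, star_mul', star_sub, star_neg,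
    star_ofNat, star_star]
  ring

lemma dot2 (ψ : Q → ℂ) : star (tildeVec ψ) ⬝ᵥ ψ = sVal ψ := by
  rw [dot_expand]
  simp only [Pi.star_apply, tv00, tv01, tv10, tv11, sVal, star_mul', star_sub, star_neg,
    star_ofNat, star_star]
  ring

lemma dot3 (ψ : Q → ℂ) : star ψ ⬝ᵥ tildeVec (vFlip ψ) = 0 := by
  rw [dot_expand]
  simp only [Pi.star_apply, tv00, tv01, tv10, tv11, vF00, vF01, vF10, vF11, star_neg, star_star]
  ring

lemma dot4 (ψ : Q → ℂ) : star (tildeVec ψ) ⬝ᵥ (vFlip ψ) = 0 := by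
  rw [dot_expand]
  simp only [Pi.star_apply, tv00, tv01, tv10, tv11, vF00, vF01, vF10, vF11, star_neg, star_star]
  ring

lemma dot5 (ψ : Q → ℂ) : star (vFlip ψ) ⬝ᵥ tildeVec ψ = 0 := by
  rw [dot_expand]
  simp only [Pi.star_apply, tv00, tv01, tv10, tv11, vF00, vF01, vF10, vF11, star_neg, star_star]
  ring

lemma dot6 (ψ : Q → ℂ) : star (tildeVec (vFlip ψ)) ⬝ᵥ ψ = 0 := by
  rw [dot_expand]
  simp only [Pi.star_apply, tv00, tv01, tv10, tv11, vF00, vF01, vF10, vF11, star_neg, star_star]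
  ring

lemma dot7 (ψ : Q → ℂ) : star (vFlip ψ) ⬝ᵥ tildeVec (vFlip ψ) = -star (sVal ψ) := by
  rw [dot_expand]
  simp only [Pi.star_apply, tv00, tv01, tv10, tv11, vF00, vF01, vF10, vF11, sVal, star_mul',
    star_sub, star_neg, star_ofNat, star_star]
  ring

lemma dot8 (ψ : Q → ℂ) : star (tildeVec (vFlip ψ)) ⬝ᵥ (vFlip ψ) = -sVal ψ := by
  rw [dot_expand]
  simp only [Pi.star_apply, tv00, tv01, tv10, tv11, vF00, vF01, vF10, vF11, sVal, star_mul',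
    star_sub, star_neg, star_ofNat, star_star]
  ring

lemma diag_pow (x y : ℂ) (m : ℕ) :
    (!![x, 0; 0, y] : Matrix (Fin 2) (Fin 2) ℂ) ^ m = !![x ^ m, 0; 0, y ^ m] := by
  induction m with
  | zero => simp [Matrix.one_fin_two]
  | succ k ih => rw [pow_succ, ih, Matrix.mul_fin_two]; norm_num [pow_succ]

lemma A0A1_pow (ε : ℝ) (m k : ℕ) :
    A0 ε ^ m * A1 ε ^ k
      = !![((Real.sqrt ((1 + ε) / 2) : ℂ)) ^ m * ((Real.sqrt ((1 - ε) / 2) : ℂ)) ^ k, 0;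
           0, ((Real.sqrt ((1 - ε) / 2) : ℂ)) ^ m * ((Real.sqrt ((1 + ε) / 2) : ℂ)) ^ k] := by
  rw [A0, A1, diag_pow, diag_pow, Matrix.mul_fin_two]
  norm_num

lemma kron_one_diag (x y : ℂ) :
    (!![x, 0; 0, y] ⊗ₖ (1 : Matrix (Fin 2) (Fin 2) ℂ))
      = Matrix.diagonal (fun p : Q => ![x, y] p.1) := by
  ext ⟨i, j⟩ ⟨k, l⟩
  fin_cases i <;> fin_cases j <;> fin_cases k <;> fin_cases l <;>
    simp [Matrix.kroneckerMap_apply, Matrix.one_apply, Matrix.diagonal_apply, Prod.ext_iff]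

lemma binom_diag (x y : ℂ) (n : ℕ) :
    ∑ m ∈ Finset.range (n + 1),
      (n.choose m : ℂ) * ((x ^ m * y ^ (n - m)) * (x ^ m * y ^ (n - m)))
      = (x ^ 2 + y ^ 2) ^ n := by
  rw [add_pow]
  apply Finset.sum_congr rfl
  intro m hm
  rw [← pow_mul, ← pow_mul]
  ring

lemma binom_cross (x y : ℂ) (n : ℕ) :
    ∑ m ∈ Finset.range (n + 1),
      (n.choose m : ℂ) * ((x ^ m * y ^ (n - m)) * (y ^ m * x ^ (n - m)))
      = (2 * (x * y)) ^ n := by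
  rw [two_mul, add_pow]
  apply Finset.sum_congr rfl
  intro m hm
  rw [mul_pow, mul_pow]
  ring

end Aux

/-- Lemma 2 / Theorem 3: a finite number of rounds of the weak measurement on
the first qubit with unrecorded outcomes cannot annihilate the entanglement of
an initially entangled pure two-qubit state. -/
theorem finite_unrecorded_weak_measurement_preserves_entanglement
    (ε : ℝ) (hε0 : 0 ≤ ε) (hε1 : ε < 1)
    (ψ : Fin 2 × Fin 2 → ℂ)
    (hnorm : (∑ p, Complex.normSq (ψ p)) = 1)
    (hent : 0 < concurrence (vecMulVec ψ (star ψ)))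
    (n : ℕ)
    (ψn : Matrix (Fin 2 × Fin 2) (Fin 2 × Fin 2) ℂ)
    (hψn : ψn = ∑ m ∈ Finset.range (n + 1), (n.choose m : ℂ) •
      (((A0 ε ^ m * A1 ε ^ (n - m)) ⊗ₖ (1 : Matrix (Fin 2) (Fin 2) ℂ)) *
        vecMulVec ψ (star ψ) *
       ((A0 ε ^ m * A1 ε ^ (n - m)) ⊗ₖ (1 : Matrix (Fin 2) (Fin 2) ℂ)))) :
    0 < concurrence ψn := by
  classical
  set a : ℝ := Real.sqrt ((1 + ε) / 2) with hadef
  set b : ℝ := Real.sqrt ((1 - ε) / 2) with hbdef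
  have h1pε : (0:ℝ) ≤ (1 + ε) / 2 := by linarith
  have h1mε : (0:ℝ) ≤ (1 - ε) / 2 := by linarith
  have ha2 : a ^ 2 = (1 + ε) / 2 := Real.sq_sqrt h1pε
  have hb2 : b ^ 2 = (1 - ε) / 2 := Real.sq_sqrt h1mε
  have h1me2 : (0:ℝ) < 1 - ε ^ 2 := by nlinarith
  set κ : ℝ := (Real.sqrt (1 - ε ^ 2)) ^ n with hκdef
  have hκpos : 0 < κ := pow_pos (Real.sqrt_pos.mpr h1me2) n
  have hκle : κ ≤ 1 := by
    apply pow_le_one₀ (Real.sqrt_nonneg _)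
    exact Real.sqrt_le_one.mpr (by nlinarith)
  have hab : 2 * (a * b) = Real.sqrt (1 - ε ^ 2) := by
    rw [hadef, hbdef, ← Real.sqrt_mul h1pε]
    rw [show (1 + ε) / 2 * ((1 - ε) / 2) = (1 - ε^2) * (1/2)^2 by ring,
      Real.sqrt_mul (le_of_lt h1me2), Real.sqrt_sq (by norm_num : (0:ℝ) ≤ 1/2)]
    ring
  set p' : ℝ := (1 + κ) / 2 with hp'def
  set q' : ℝ := (1 - κ) / 2 with hq'def
  have hq0 : 0 ≤ q' := by rw [hq'def]; linarith
  have hpq : p' + q' = 1 := by rw [hp'def, hq'def]; ring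
  have hpmq : p' - q' = κ := by rw [hp'def, hq'def]; ring
  have hqlep : q' ≤ p' := by rw [hp'def, hq'def]; linarith
  have ha2b2 : ((a:ℂ))^2 + ((b:ℂ))^2 = 1 := by
    have h : a^2 + b^2 = 1 := by rw [ha2, hb2]; ring
    exact_mod_cast h
  have habC : 2 * ((a:ℂ) * (b:ℂ)) = ((Real.sqrt (1 - ε^2) : ℝ) : ℂ) := by
    exact_mod_cast hab
  set v : Fin 2 × Fin 2 → ℂ := vFlip ψ with hvdef
  -- Step 1: mixture decomposition
  have hdecomp : ψn = (p' : ℂ) • vecMulVec ψ (star ψ)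
      + (q' : ℂ) • vecMulVec v (star v) := by
    rw [hψn]
    ext p q
    rw [Matrix.sum_apply]
    have hterm : ∀ m, ((n.choose m : ℂ) •
        (((A0 ε ^ m * A1 ε ^ (n - m)) ⊗ₖ (1 : Matrix (Fin 2) (Fin 2) ℂ)) * vecMulVec ψ (star ψ) *
          ((A0 ε ^ m * A1 ε ^ (n - m)) ⊗ₖ (1 : Matrix (Fin 2) (Fin 2) ℂ)))) p q
        = (n.choose m : ℂ) * ((![(a:ℂ)^m * (b:ℂ)^(n-m), (b:ℂ)^m * (a:ℂ)^(n-m)]) p.1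
            * (![(a:ℂ)^m * (b:ℂ)^(n-m), (b:ℂ)^m * (a:ℂ)^(n-m)]) q.1)
          * (ψ p * star (ψ q)) := by
      intro m
      rw [A0A1_pow, kron_one_diag]
      rw [Matrix.smul_apply, Matrix.mul_diagonal, Matrix.diagonal_mul]
      simp only [vecMulVec_apply, smul_eq_mul, Pi.star_apply]
      ring
    rw [Finset.sum_congr rfl (fun m _ => hterm m), ← Finset.sum_mul]
    simp only [Matrix.add_apply, Matrix.smul_apply, vecMulVec_apply, smul_eq_mul, Pi.star_apply]
    rcases p with ⟨i, j⟩
    rcases q with ⟨k, l⟩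
    have hpqC : ((p':ℂ)) + ((q':ℂ)) = 1 := by exact_mod_cast hpq
    have hpmqC : ((p':ℂ)) - ((q':ℂ)) = ((κ:ℝ):ℂ) := by exact_mod_cast hpmq
    have hκC : (2 * ((a:ℂ) * (b:ℂ)))^n = ((κ:ℝ):ℂ) := by
      rw [habC, hκdef]; push_cast; ring
    fin_cases i <;> fin_cases k <;>
      simp only [Fin.zero_eta, Fin.mk_one, Matrix.cons_val_zero, Matrix.cons_val_one,
        Matrix.head_cons, hvdef, vFlip, if_true, one_ne_zero, if_false, reduceIte, star_neg]
    · rw [binom_diag, ha2b2, one_pow]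
      linear_combination (-(ψ (0, j) * star (ψ (0, l)))) * hpqC
    · rw [binom_cross, hκC]
      linear_combination (-(ψ (0, j) * star (ψ (1, l)))) * hpmqC
    · rw [binom_cross ((b:ℂ)) ((a:ℂ)) n,
        show (2 * ((b:ℂ) * (a:ℂ)))^n = ((κ:ℝ):ℂ) by rw [← hκC]; ring_nf]
      linear_combination (-(ψ (1, j) * star (ψ (0, l)))) * hpmqC
    · rw [binom_diag ((b:ℂ)) ((a:ℂ)) n, show ((b:ℂ))^2 + ((a:ℂ))^2 = 1 by rw [← ha2b2]; ring,
        one_pow]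
      linear_combination (-(ψ (1, j) * star (ψ (1, l)))) * hpqC
  -- Step 2: spin flip of the mixture
  set tu : Fin 2 × Fin 2 → ℂ := tildeVec ψ with htudef
  set tv : Fin 2 × Fin 2 → ℂ := tildeVec (vFlip ψ) with htvdef
  set s : ℂ := sVal ψ with hsdef
  have spinFlip_add : ∀ σ τ : Matrix (Fin 2 × Fin 2) (Fin 2 × Fin 2) ℂ,
      spinFlip (σ + τ) = spinFlip σ + spinFlip τ := by
    intro σ τ
    unfold spinFlip
    have h : (σ + τ).map star = σ.map star + τ.map star := by
      ext pp qq; simp [Matrix.map_apply]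
    rw [h, mul_add, add_mul]
  have spinFlip_smul : ∀ (c : ℝ) (σ : Matrix (Fin 2 × Fin 2) (Fin 2 × Fin 2) ℂ),
      spinFlip ((c:ℂ) • σ) = (c:ℂ) • spinFlip σ := by
    intro c σ
    unfold spinFlip
    have h : ((c:ℂ) • σ).map star = (c:ℂ) • σ.map star := by
      ext pp qq
      simp [Matrix.map_apply, Complex.conj_ofReal]
    rw [h, Matrix.mul_smul, Matrix.smul_mul]
  have hsF : spinFlip ψn = (p':ℂ) • vecMulVec tu (star tu) + (q':ℂ) • vecMulVec tv (star tv) := by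
    rw [hdecomp]
    rw [spinFlip_add, spinFlip_smul, spinFlip_smul, hvdef, spinFlip_pure, spinFlip_pure]
  -- Step 3: the product matrix
  set c1 : ℂ := (p':ℂ)^2 * star s with hc1def
  set c2 : ℂ := -((q':ℂ)^2 * star s) with hc2def
  have hM : ψn * spinFlip ψn
      = c1 • vecMulVec ψ (star tu) + c2 • vecMulVec v (star tv) := by
    rw [hsF, hdecomp]
    rw [add_mul, mul_add, mul_add]
    simp only [Matrix.smul_mul, Matrix.mul_smul, vecMulVec_mul_vecMulVec']
    rw [hvdef, htudef, htvdef, dot1, dot3, dot5, dot7]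
    simp only [zero_smul, smul_zero, add_zero, zero_add, smul_smul]
    rw [hc1def, hc2def, hsdef]
    congr 1
    · congr 1; ring
    · congr 1; ring
  -- Step 4: factorization through 2-dimensional space
  set e1 : Fin 2 × Fin 2 → ℂ := fun r => if r = (0,0) then 1 else 0 with he1def
  set e2 : Fin 2 × Fin 2 → ℂ := fun r => if r = (0,1) then 1 else 0 with he2def
  have he11 : e1 ⬝ᵥ e1 = 1 := by rw [dot_expand]; norm_num [he1def]
  have he12 : e1 ⬝ᵥ e2 = 0 := by rw [dot_expand]; norm_num [he1def, he2def, Prod.ext_iff]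
  have he21 : e2 ⬝ᵥ e1 = 0 := by rw [dot_expand]; norm_num [he1def, he2def, Prod.ext_iff]
  have he22 : e2 ⬝ᵥ e2 = 1 := by rw [dot_expand]; norm_num [he2def, Prod.ext_iff]
  set F : Matrix (Fin 2 × Fin 2) (Fin 2 × Fin 2) ℂ :=
    vecMulVec (fun p1 => c1 * ψ p1) e1 + vecMulVec (fun p1 => c2 * v p1) e2 with hFdef
  set G : Matrix (Fin 2 × Fin 2) (Fin 2 × Fin 2) ℂ :=
    vecMulVec e1 (star tu) + vecMulVec e2 (star tv) with hGdef
  have hFG : F * G = ψn * spinFlip ψn := by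
    rw [hM, hFdef, hGdef, add_mul, mul_add, mul_add]
    simp only [vecMulVec_mul_vecMulVec']
    have d1 : star tu ⬝ᵥ e1 = star tu ⬝ᵥ e1 := rfl
    -- dot products of e's with themselves appear as (e1 ⬝ᵥ e1) etc? no: pattern is
    -- vecMulVec a e1 * vecMulVec e1 c = (e1 ⬝ᵥ e1) • vecMulVec a c
    rw [he11, he12, he21, he22]
    simp only [one_smul, zero_smul, add_zero, zero_add]
    congr 1
    · ext pp qq; simp [vecMulVec_apply, Matrix.smul_apply]; ring
    · ext pp qq; simp [vecMulVec_apply, Matrix.smul_apply]; ring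
  set d : Fin 2 × Fin 2 → ℂ := fun r =>
    if r = (0,0) then ((p'^2 * Complex.normSq s : ℝ) : ℂ)
    else if r = (0,1) then ((q'^2 * Complex.normSq s : ℝ) : ℂ) else 0 with hddef
  have hss : star s * s = ((Complex.normSq s : ℝ) : ℂ) := by
    rw [mul_comm, show (star s : ℂ) = (starRingEnd ℂ) s from rfl, Complex.mul_conj]
  have hGF : G * F = Matrix.diagonal d := by
    rw [hFdef, hGdef, add_mul, mul_add, mul_add]
    simp only [vecMulVec_mul_vecMulVec']
    have k1 : star tu ⬝ᵥ (fun p1 => c1 * ψ p1) = c1 * s := by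
      rw [show (fun p1 => c1 * ψ p1) = c1 • ψ from rfl, dotProduct_smul,
        htudef, hsdef, dot2, smul_eq_mul]
    have k2 : star tu ⬝ᵥ (fun p1 => c2 * v p1) = 0 := by
      rw [show (fun p1 => c2 * v p1) = c2 • v from rfl, dotProduct_smul,
        htudef, hvdef, dot4, smul_eq_mul, mul_zero]
    have k3 : star tv ⬝ᵥ (fun p1 => c1 * ψ p1) = 0 := by
      rw [show (fun p1 => c1 * ψ p1) = c1 • ψ from rfl, dotProduct_smul,
        htvdef, dot6, smul_eq_mul, mul_zero]
    have k4 : star tv ⬝ᵥ (fun p1 => c2 * v p1) = c2 * (-s) := by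
      rw [show (fun p1 => c2 * v p1) = c2 • v from rfl, dotProduct_smul,
        htvdef, hvdef, hsdef, dot8, smul_eq_mul]
    rw [k1, k2, k3, k4]
    simp only [zero_smul, add_zero, zero_add]
    have hv1 : c1 * s = ((p'^2 * Complex.normSq s : ℝ) : ℂ) := by
      rw [hc1def]; push_cast
      rw [show (p':ℂ)^2 * star s * s = (p':ℂ)^2 * (star s * s) by ring, hss]
    have hv2 : c2 * (-s) = ((q'^2 * Complex.normSq s : ℝ) : ℂ) := by
      rw [hc2def]; push_cast
      rw [show -((q':ℂ)^2 * star s) * (-s) = (q':ℂ)^2 * (star s * s) by ring, hss]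
    rw [hv1, hv2]
    ext ⟨i, j⟩ ⟨k, l⟩
    fin_cases i <;> fin_cases j <;> fin_cases k <;> fin_cases l <;>
      simp [Matrix.add_apply, Matrix.smul_apply, vecMulVec_apply, he1def, he2def, hddef,
        Matrix.diagonal_apply, Prod.ext_iff]
  have huniv : (Finset.univ.val : Multiset (Fin 2 × Fin 2))
      = {((0:Fin 2),(0:Fin 2)), ((0:Fin 2),(1:Fin 2)), ((1:Fin 2),(0:Fin 2)),
          ((1:Fin 2),(1:Fin 2))} := by decide
  -- s is nonzero since the initial state is entangled
  have hs0 : s ≠ 0 := by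
    intro h0
    have hzero : vecMulVec ψ (star ψ) * spinFlip (vecMulVec ψ (star ψ)) = 0 := by
      rw [spinFlip_pure, vecMulVec_mul_vecMulVec', dot1, ← hsdef, h0, star_zero, zero_smul]
    have hcz : concurrence (vecMulVec ψ (star ψ)) = 0 := by
      have hr : (vecMulVec ψ (star ψ) * spinFlip (vecMulVec ψ (star ψ))).charpoly.roots
          = {(((0:ℝ)^2 : ℝ) : ℂ), (((0:ℝ)^2 : ℝ) : ℂ), 0, 0} := by
        rw [hzero, show (0 : Matrix (Fin 2 × Fin 2) (Fin 2 × Fin 2) ℂ)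
            = Matrix.diagonal (fun _ => 0) by simp, roots_charpoly_diagonal, huniv]
        simp
      have := concurrence_eval _ 0 0 le_rfl le_rfl hr
      simpa using this
    linarith
  have hnsq : 0 < Complex.normSq s := Complex.normSq_pos.mpr hs0
  set t : ℝ := Real.sqrt (Complex.normSq s) with htdef
  have ht : 0 < t := Real.sqrt_pos.mpr hnsq
  have ht2 : t^2 = Complex.normSq s := Real.sq_sqrt hnsq.le
  -- roots of the characteristic polynomial
  have hroots : (ψn * spinFlip ψn).charpoly.roots
      = {(((p' * t)^2 : ℝ) : ℂ), (((q' * t)^2 : ℝ) : ℂ), 0, 0} := by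
    rw [← hFG, _root_.charpoly_mul_comm', hGF, roots_charpoly_diagonal, huniv]
    have hp2 : (p' * t)^2 = p'^2 * Complex.normSq s := by rw [mul_pow, ht2]
    have hq2 : (q' * t)^2 = q'^2 * Complex.normSq s := by rw [mul_pow, ht2]
    have e1' : d ((0:Fin 2),(0:Fin 2)) = (((p' * t)^2 : ℝ) : ℂ) := by
      simp only [hddef, hp2]
      norm_num
    have e2' : d ((0:Fin 2),(1:Fin 2)) = (((q' * t)^2 : ℝ) : ℂ) := by
      simp only [hddef, hq2]
      norm_num [Prod.ext_iff]
    have e3' : d ((1:Fin 2),(0:Fin 2)) = 0 := by rw [hddef]; norm_num [Prod.ext_iff]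
    have e4' : d ((1:Fin 2),(1:Fin 2)) = 0 := by rw [hddef]; norm_num [Prod.ext_iff]
    simp only [Multiset.insert_eq_cons, Multiset.map_cons, Multiset.map_singleton,
      e1', e2', e3', e4']
  have heval := concurrence_eval ψn (p' * t) (q' * t)
    (mul_nonneg hq0 ht.le) (mul_le_mul_of_nonneg_right hqlep ht.le) hroots
  rw [heval]
  have : p' * t - q' * t = κ * t := by rw [← hpmq]; ring
  rw [this]
  positivity
end
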